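/- arXiv:2101.00642 — 3 statements merged into one kernel-verified Lean document; each statement's English description precedes it below -/
import Mathlib

section
/- Let k and l be integers ≥ 2 of opposite parity, with k ≥ 2l+1 if k is odd and k ≥ 2l−2 if k is even, and let d = (3k+l+1)/2. If l = 2 or l = 3, then any two symmetric (d,k) circuit codes in F(d,k,k+l) of maximum length S(d,k,k+l) = 4k+2l are isomorphic. -/
/-- The graph of the `d`-dimensional hypercube: vertices are binary vectors of
length `d`, adjacent iff they differ in exactly one coordinate. -/
def hypercube (d : ℕ) : SimpleGraph (Fin d → Bool) where
  Adj x y := hammingDist x y = 1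
  symm := by
    constructor
    intro x y h
    rwa [hammingDist_comm]
  loopless := by
    constructor
    intro x h
    simp [hammingDist_self] at h

/-- Distance along a cycle of length `N` between positions `i` and `j`. -/
def cycDist {N : ℕ} (i j : ZMod N) : ℕ := min (i - j).val (j - i).val

/-- `x : ZMod N → (Fin d → Bool)` is a `(d,k)` circuit code of length `N`:
a cycle in the hypercube `I(d)` satisfying the spread-`k` distance requirement. -/
structure IsCircuitCode (d k N : ℕ) (x : ZMod N → Fin d → Bool) : Prop where
  inj : Function.Injective x
  adj : ∀ i : ZMod N, (hypercube d).Adj (x i) (x (i + 1))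
  spread : ∀ i j : ZMod N, min (cycDist i j) k ≤ (hypercube d).dist (x i) (x j)

/-- `τ` is the transition sequence of the cycle `x`: `τ i` is the unique
coordinate in which `x i` and `x (i+1)` differ. -/
def IsTransitionSeq {d N : ℕ} (x : ZMod N → Fin d → Bool) (τ : ZMod N → Fin d) : Prop :=
  ∀ (i : ZMod N) (j : Fin d), x (i + 1) j ≠ x i j ↔ j = τ i

/-- The segment of `τ` of length `m` starting at position `start` is a bit run:
all of its entries are distinct. -/
def IsBitRun {d N : ℕ} (τ : ZMod N → Fin d) (start : ZMod N) (m : ℕ) : Prop :=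
  ∀ a b : Fin m, τ (start + ((a : ℕ) : ZMod N)) = τ (start + ((b : ℕ) : ZMod N)) → a = b

/-- `δ(ω)`: the number of coordinates appearing an odd number of times in the
segment of `τ` of length `m` starting at `start`. -/
def segDelta {d N : ℕ} (τ : ZMod N → Fin d) (start : ZMod N) (m : ℕ) : ℕ :=
  (Finset.univ.filter fun c : Fin d =>
    Odd (Finset.univ.filter fun t : Fin m => τ (start + ((t : ℕ) : ZMod N)) = c).card).card


open Finset

/-! ### Engine -/

/-- count of occurrences of letter `c` in the window of length `m` starting at `i`. -/
def cnt {d N : ℕ} (τ : ZMod N → Fin d) (i : ZMod N) (m : ℕ) (c : Fin d) : ℕ :=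
  ((Finset.range m).filter fun t => τ (i + (t : ℕ)) = c).card

/-- number of letters occurring an odd number of times in a window. -/
def dlt {d N : ℕ} (τ : ZMod N → Fin d) (i : ZMod N) (m : ℕ) : ℕ :=
  (Finset.univ.filter fun c : Fin d => Odd (cnt τ i m c)).card

lemma walk_of_hamming {d : ℕ} (n : ℕ) (x y : Fin d → Bool) (hn : hammingDist x y = n) :
    ∃ p : (hypercube d).Walk x y, p.length = n := by
  induction n generalizing y with
  | zero =>
      rw [hammingDist_eq_zero] at hn
      subst hn; exact ⟨SimpleGraph.Walk.nil, rfl⟩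
  | succ n ih =>
      have hne : x ≠ y := by
        intro h; subst h; simp [hammingDist_self] at hn
      obtain ⟨j, hj⟩ : ∃ j, x j ≠ y j := by
        by_contra h
        push_neg at h
        exact hne (funext h)
      set y' := Function.update y j (x j) with hy'
      have hdy' : hammingDist x y' = n := by
        have : (Finset.univ.filter fun i => x i ≠ y' i)
            = (Finset.univ.filter fun i => x i ≠ y i) \ {j} := by
          ext i
          rcases eq_or_ne i j with rfl | hij
          · simp [hy', Function.update_self]
          · simp [hy', Function.update_of_ne hij, hij]
        have hcard : hammingDist x y' = hammingDist x y - 1 := by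
          show (Finset.univ.filter fun i => x i ≠ y' i).card = _
          rw [this, Finset.card_sdiff_of_subset (by simp [hj])]
          simp [hammingDist]
        omega
      have hadj : (hypercube d).Adj y' y := by
        show hammingDist y' y = 1
        have : (Finset.univ.filter fun i => y' i ≠ y i) = {j} := by
          ext i
          rcases eq_or_ne i j with rfl | hij
          · simp [hy', Function.update_self, hj, Ne.symm hj]
          · simp [hy', Function.update_of_ne hij, hij]
        show (Finset.univ.filter fun i => y' i ≠ y i).card = 1
        rw [this]; simp
      obtain ⟨p, hp⟩ := ih y' hdy'
      exact ⟨p.concat hadj, by simp [SimpleGraph.Walk.length_concat, hp]⟩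

lemma dist_le_hamming {d : ℕ} (x y : Fin d → Bool) :
    (hypercube d).dist x y ≤ hammingDist x y := by
  obtain ⟨p, hp⟩ := walk_of_hamming (hammingDist x y) x y rfl
  have := SimpleGraph.dist_le p
  omega

lemma x_flip {d N : ℕ} {x : ZMod N → Fin d → Bool} {τ : ZMod N → Fin d}
    (hτ : IsTransitionSeq x τ) (i : ZMod N) (m : ℕ) (j : Fin d) :
    (x (i + (m : ℕ)) j ≠ x i j) ↔ Odd (cnt τ i m j) := by
  induction m with
  | zero => simp [cnt]
  | succ m ih =>
      have hstep : (x ((i + (m : ℕ)) + 1) j ≠ x (i + (m : ℕ)) j) ↔ j = τ (i + (m : ℕ)) :=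
        hτ _ j
      have hcast : i + ((m + 1 : ℕ) : ZMod N) = (i + (m : ℕ)) + 1 := by push_cast; ring
      have hcnt : cnt τ i (m + 1) j = cnt τ i m j + if τ (i + (m : ℕ)) = j then 1 else 0 := by
        unfold cnt
        rw [Finset.range_add_one, Finset.filter_insert]
        split_ifs with h
        · rw [Finset.card_insert_of_notMem (by simp)]
        · simp
  
      rw [hcast, hcnt]
      by_cases hj : τ (i + (m : ℕ)) = j
      · have h1 : x ((i + (m : ℕ)) + 1) j ≠ x (i + (m : ℕ)) j := hstep.mpr hj.symm
        simp only [hj, if_pos]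
        constructor
        · intro h2
          rcases Nat.even_or_odd (cnt τ i m j) with he | ho
          · exact Even.add_one he
          · exfalso
            have : x (i + (m : ℕ)) j ≠ x i j := ih.mpr ho
            -- x(i+m+1) ≠ x(i+m), x(i+m) ≠ x i, so x(i+m+1) = x i (Bool)
            revert h1 h2 this
            cases x ((i + (m : ℕ)) + 1) j <;> cases x (i + (m : ℕ)) j <;> cases x i j <;> simp
        · intro ho
          have he : ¬ Odd (cnt τ i m j) := by
            rcases ho with ⟨t, ht⟩
            intro ho'; rcases ho' with ⟨t', ht'⟩; omega
          have : ¬ (x (i + (m : ℕ)) j ≠ x i j) := fun h => he (ih.mp h)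
          revert h1 this
          cases x ((i + (m : ℕ)) + 1) j <;> cases x (i + (m : ℕ)) j <;> cases x i j <;> simp
      · have h1 : ¬ (x ((i + (m : ℕ)) + 1) j ≠ x (i + (m : ℕ)) j) := by
          intro h; exact hj (hstep.mp h).symm
        simp only [hj, if_neg, Nat.add_zero, if_false]
        have hx1 : x ((i + (m : ℕ)) + 1) j = x (i + (m : ℕ)) j := by
          revert h1; cases x ((i + (m : ℕ)) + 1) j <;> cases x (i + (m : ℕ)) j <;> simp
        rw [hx1]; exact ih

lemma hamming_eq_dlt {d N : ℕ} {x : ZMod N → Fin d → Bool} {τ : ZMod N → Fin d}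
    (hτ : IsTransitionSeq x τ) (i : ZMod N) (m : ℕ) :
    hammingDist (x i) (x (i + (m : ℕ))) = dlt τ i m := by
  show (Finset.univ.filter fun j => x i j ≠ x (i + (m : ℕ)) j).card = _
  unfold dlt
  congr 1
  ext j
  simp only [Finset.mem_filter, Finset.mem_univ, true_and]
  rw [← x_flip hτ i m j]
  tauto

section Engine
variable {d k N : ℕ} {x : ZMod N → Fin d → Bool} {τ : ZMod N → Fin d}

lemma dlt_ge (hN : 0 < N) (hx : IsCircuitCode d k N x) (hτ : IsTransitionSeq x τ)
    (i : ZMod N) (m : ℕ) (hm1 : 1 ≤ m) (hm2 : 2 * m ≤ N) :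
    min m k ≤ dlt τ i m := by
  haveI : NeZero N := ⟨by omega⟩
  have hmN : m < N := by omega
  have hval : ((m : ZMod N)).val = m := ZMod.val_natCast_of_lt hmN
  have hne : (m : ZMod N) ≠ 0 := by
    intro h
    rw [h] at hval
    simp [ZMod.val_zero] at hval
    omega
  have hcyc : cycDist i (i + (m : ℕ)) = m := by
    unfold cycDist
    have h1 : i - (i + (m : ℕ)) = -(m : ZMod N) := by ring
    have h2 : (i + (m : ℕ)) - i = (m : ZMod N) := by ring
    rw [h1, h2, ZMod.neg_val, hval]
    simp [hne]
    omega
  have hs := hx.spread i (i + (m : ℕ))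
  rw [hcyc] at hs
  have hd := dist_le_hamming (x i) (x (i + (m : ℕ)))
  rw [hamming_eq_dlt hτ i m] at hd
  omega

lemma sum_cnt (i : ZMod N) (m : ℕ) : ∑ c : Fin d, cnt τ i m c = m := by
  unfold cnt
  rw [← Finset.card_eq_sum_card_fiberwise (fun t _ => Finset.mem_univ (τ (i + (t : ℕ))))]
  simp

lemma dlt_le (i : ZMod N) (m : ℕ) :
    dlt τ i m + 2 * ((Finset.univ.filter fun c : Fin d => 2 ≤ cnt τ i m c).card) ≤ m := by
  have h1 : dlt τ i m = ∑ c : Fin d, (if Odd (cnt τ i m c) then 1 else 0) := by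
    unfold dlt
    rw [Finset.card_filter]
  have h2 : ((Finset.univ.filter fun c : Fin d => 2 ≤ cnt τ i m c).card)
      = ∑ c : Fin d, (if 2 ≤ cnt τ i m c then 1 else 0) := by
    rw [Finset.card_filter]
  have key : ∑ c : Fin d, ((if Odd (cnt τ i m c) then 1 else 0)
      + 2 * (if 2 ≤ cnt τ i m c then 1 else 0)) ≤ ∑ c : Fin d, cnt τ i m c := by
    apply Finset.sum_le_sum
    intro c _
    rcases Nat.even_or_odd (cnt τ i m c) with he | ho
    · have hne : ¬ Odd (cnt τ i m c) := by simp [Nat.not_odd_iff_even, he]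
      rw [if_neg hne]
      split_ifs with h
      · omega
      · omega
    · have hp : (1:ℕ) ≤ cnt τ i m c := ho.pos
      rw [if_pos ho]
      split_ifs with h
      · rcases ho with ⟨t, ht⟩; omega
      · omega
  rw [sum_cnt] at key
  rw [h1, h2, Finset.mul_sum, ← Finset.sum_add_distrib]
  exact key

lemma two_le_cnt (i : ZMod N) (L : ℕ) (cc : Fin d) (u v : ℕ) (huv : u < v) (hv : v < L)
    (h1 : τ (i + (u : ℕ)) = cc) (h2 : τ (i + (v : ℕ)) = cc) : 2 ≤ cnt τ i L cc := by
  have : ({u, v} : Finset ℕ) ⊆ (Finset.range L).filter fun t => τ (i + (t : ℕ)) = cc := by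
    intro t ht
    simp only [Finset.mem_insert, Finset.mem_singleton] at ht
    rcases ht with rfl | rfl <;> simp [Finset.mem_filter, Finset.mem_range, *] <;> omega
  have hc : ({u, v} : Finset ℕ).card = 2 := by
    rw [Finset.card_insert_of_notMem (by simp; omega), Finset.card_singleton]
  have := Finset.card_le_card this
  unfold cnt
  omega

/-- Key window bound: if `T` is a set of letters each occurring at least twice in the
window of length `L`, then `min L k + 2 * T.card ≤ L`. -/
lemma window_bound (hN : 0 < N) (hx : IsCircuitCode d k N x) (hτ : IsTransitionSeq x τ)
    (i : ZMod N) (L : ℕ) (hL1 : 1 ≤ L) (hL2 : 2 * L ≤ N) (T : Finset (Fin d))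
    (hT : ∀ c ∈ T, 2 ≤ cnt τ i L c) :
    min L k + 2 * T.card ≤ L := by
  have h1 := dlt_ge hN hx hτ i L hL1 hL2
  have h2 := dlt_le (τ := τ) i L
  have h3 : T.card ≤ ((Finset.univ.filter fun c : Fin d => 2 ≤ cnt τ i L c).card) := by
    apply Finset.card_le_card
    intro c hc
    simp only [Finset.mem_filter, Finset.mem_univ, true_and]
    exact hT c hc
  omega

lemma tau_ne (hN : 0 < N) (hkN : 2 * k ≤ N) (hx : IsCircuitCode d k N x)
    (hτ : IsTransitionSeq x τ) (i : ZMod N) (e : ℕ) (he1 : 1 ≤ e) (he2 : e < k) :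
    τ i ≠ τ (i + (e : ℕ)) := by
  intro heq
  have hw := window_bound hN hx hτ i (e + 1) (by omega) (by omega) {τ i}
    (by
      intro c hc
      simp only [Finset.mem_singleton] at hc
      subst hc
      apply two_le_cnt (τ := τ) i (e+1) (τ i) 0 e (by omega) (by omega)
      · norm_num
      · exact heq.symm)
  simp only [Finset.card_singleton] at hw
  omega

end Engine

/-- canonical letter pattern -/
def letterOf (k l t n : ℕ) : ℕ :=
  if n < k + l then n
  else if (n - (k+l)) % 2 = 0 ∧ n - (k+l) ≤ 2*t then (n - (k+l)) + 1
  else if (n - (k+l)) % 2 = 1 ∧ 2*t+1 ≤ n - (k+l) then (n - (k+l)) + 2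
  else n

/-- helper: windows containing a family of doubled letters -/
lemma pairs_window {d k N : ℕ} {x : ZMod N → Fin d → Bool} {τ : ZMod N → Fin d}
    (hN : 0 < N) (hx : IsCircuitCode d k N x) (hτ : IsTransitionSeq x τ)
    (i : ZMod N) (L : ℕ) (hL1 : k + 1 ≤ L) (hk1 : 1 ≤ k) (hL2 : 2 * L ≤ N)
    (M : Finset ℕ) (g : ℕ → Fin d) (hg : Set.InjOn g M)
    (u v : ℕ → ℕ)
    (hocc : ∀ m ∈ M, u m < v m ∧ v m < L ∧
      τ (i + (u m : ℕ)) = g m ∧ τ (i + (v m : ℕ)) = g m) :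
    k + 2 * M.card ≤ L := by
  have hcard : (M.image g).card = M.card := Finset.card_image_of_injOn hg
  have hw := window_bound hN hx hτ i L (by omega) hL2 (M.image g) (by
    intro c hc
    obtain ⟨m, hm, rfl⟩ := Finset.mem_image.mp hc
    obtain ⟨h1, h2, h3, h4⟩ := hocc m hm
    exact two_le_cnt i L (g m) (u m) (v m) h1 h2 h3 h4)
  rw [hcard] at hw
  have : min L k = k := by omega
  omega

section Anchored

variable {k l d : ℕ} {x : ZMod (4*k+2*l) → Fin d → Bool} {τ : ZMod (4*k+2*l) → Fin d}
  {s : ZMod (4*k+2*l)}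

set_option maxHeartbeats 2000000 in
/-- Structure theorem for a symmetric maximum circuit code with an anchored bit run. -/
lemma struct_exists
    (hkl : (l = 2 ∧ k % 2 = 1 ∧ 5 ≤ k) ∨ (l = 3 ∧ k % 2 = 0 ∧ 4 ≤ k))
    (hd : 2 * d = 3 * k + l + 1)
    (hx : IsCircuitCode d k (4*k+2*l) x) (hτ : IsTransitionSeq x τ)
    (hsym : ∀ i : ZMod (4*k+2*l), τ (i + ((2 * k + l : ℕ) : ZMod (4*k+2*l))) = τ i)
    (hrun : IsBitRun τ s (k+l)) :
    ∃ t : ℕ, (l = 2 → 2*t + 1 = k) ∧ (l = 3 → 2*t + 2 ≤ k) ∧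
      ∀ a b : ℕ, a < 2*k+l → b < 2*k+l →
        (τ (s + (a : ZMod (4*k+2*l))) = τ (s + (b : ZMod (4*k+2*l)))
          ↔ letterOf k l t a = letterOf k l t b) := by
  classical
  have hk5 : 4 ≤ k := by omega
  have hl23 : l = 2 ∨ l = 3 := by omega
  have hN0 : 0 < 4*k+2*l := by omega
  set W : ℕ → Fin d := fun n => τ (s + (n : ZMod (4*k+2*l))) with hW
  have hWadd : ∀ base t : ℕ,
      τ ((s + (base : ZMod (4*k+2*l))) + (t : ZMod (4*k+2*l))) = W (base + t) := by
    intro base t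
    show _ = τ (s + ((base + t : ℕ) : ZMod (4*k+2*l)))
    push_cast
    ring_nf
  have hper : ∀ n : ℕ, W (n + (2*k+l)) = W n := by
    intro n
    show τ (s + ((n + (2*k+l) : ℕ) : ZMod (4*k+2*l))) = τ (s + (n : ZMod (4*k+2*l)))
    have hcast : ((n + (2*k+l) : ℕ) : ZMod (4*k+2*l))
        = (n : ZMod (4*k+2*l)) + ((2*k+l : ℕ) : ZMod (4*k+2*l)) := by push_cast; ring
    rw [hcast, ← add_assoc]
    exact hsym (s + (n : ZMod (4*k+2*l)))
  have hmod : ∀ n : ℕ, W n = W (n % (2*k+l)) := by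
    intro n
    conv_lhs => rw [show n = n % (2*k+l) + (2*k+l) * (n / (2*k+l)) from (Nat.mod_add_div n (2*k+l)).symm]
    generalize n / (2*k+l) = q
    induction q with
    | zero => simp
    | succ q ih =>
        have h1 : n % (2*k+l) + (2*k+l) * (q + 1) = (n % (2*k+l) + (2*k+l) * q) + (2*k+l) := by ring
        rw [h1, hper]
        exact ih
  have hrun' : ∀ a b : ℕ, a < k+l → b < k+l → W a = W b → a = b := by
    intro a b ha hb hab
    have := hrun ⟨a, ha⟩ ⟨b, hb⟩ hab
    simpa using congrArg Fin.val this
  have hnear : ∀ (a e : ℕ), 1 ≤ e → e < k → W (a + e) ≠ W a := by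
    intro a e he1 he2 hne
    have := tau_ne hN0 (by omega) hx hτ (s + (a : ZMod (4*k+2*l))) e he1 he2
    rw [hWadd a e] at this
    exact this hne.symm
  -- partner analysis
  have hpartner : ∀ j i' : ℕ, j < k → i' < k+l → W (k+l+j) = W i' →
      i' = j+1 ∨ (l = 3 ∧ i' = j+2) := by
    intro j i' hj hi' heq
    -- distance exclusions
    have h1 : ¬ (k+l+j - i' < k) := by
      intro hlt
      have he1 : 1 ≤ k+l+j - i' := by omega
      have := hnear i' (k+l+j - i') he1 hlt
      rw [show i' + (k+l+j - i') = k+l+j by omega] at this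
      exact this heq
    have h2 : i' ≥ j := by
      by_contra hc
      push_neg at hc
      -- e₂ = k + i' - j < k when i' < j
      have heq2 : W ((k+l+j) + (k + i' - j)) = W (k+l+j) := by
        rw [show (k+l+j) + (k + i' - j) = i' + (2*k+l) by omega, hper, heq]
      exact hnear (k+l+j) (k + i' - j) (by omega) (by omega) heq2
    -- so i' ∈ [j, l+j]; refine with windows
    have hwin1 : k + 2 ≤ k+l+j - i' + 1 := by
      have hpw := pairs_window hN0 hx hτ (s + (i' : ZMod (4*k+2*l))) (k+l+j - i' + 1)
        (by omega) (by omega) (by omega) {0} (fun _ => W i')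
        (by intro a _ b _ _; simp_all)
        (fun _ => 0) (fun _ => k+l+j - i')
        (by
          intro m hm
          refine ⟨by omega, by omega, ?_, ?_⟩
          · rw [hWadd, Nat.add_zero]
          · rw [hWadd, show i' + (k+l+j-i') = k+l+j by omega]; exact heq)
      rw [Finset.card_singleton] at hpw
      omega
    have hwin2 : k + 2 ≤ k + i' - j + 1 := by
      have hik : k + 1 ≤ k + i' - j + 1 := by omega
      have hpw := pairs_window hN0 hx hτ (s + ((k+l+j : ℕ) : ZMod (4*k+2*l))) (k + i' - j + 1)
        hik (by omega) (by omega) {0} (fun _ => W (k+l+j))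
        (by intro a _ b _ _; simp_all)
        (fun _ => 0) (fun _ => k + i' - j)
        (by
          intro m hm
          refine ⟨by omega, by omega, ?_, ?_⟩
          · rw [hWadd, Nat.add_zero]
          · rw [hWadd, show (k+l+j) + (k+i'-j) = i' + (2*k+l) by omega, hper]
            exact heq.symm)
      rw [Finset.card_singleton] at hpw
      omega
    omega
  have hslots : ∀ j j' : ℕ, j < k → j' < k → j ≠ j' → W (k+l+j) ≠ W (k+l+j') := by
    intro j j' hj hj' hne heq
    rcases Nat.lt_or_ge j j' with h | h
    · exact hnear (k+l+j) (j' - j) (by omega) (by omega)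
        (by rw [show (k+l+j) + (j'-j) = k+l+j' by omega, heq])
    · have hlt : j' < j := by omega
      exact hnear (k+l+j') (j - j') (by omega) (by omega)
        (by rw [show (k+l+j') + (j-j') = k+l+j by omega, heq.symm])
  -- the set of paired slots
  set S : Finset ℕ := (Finset.range k).filter
    (fun j => ∃ i' ∈ Finset.range (k+l), W (k+l+j) = W i') with hS
  have hSmem : ∀ j, j ∈ S ↔ (j < k ∧ ∃ i' , i' < k+l ∧ W (k+l+j) = W i') := by
    intro j
    rw [hS, Finset.mem_filter, Finset.mem_range]
    constructor
    · rintro ⟨h1, i', hi', h2⟩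
      exact ⟨h1, i', Finset.mem_range.mp hi', h2⟩
    · rintro ⟨h1, i', hi', h2⟩
      exact ⟨h1, i', Finset.mem_range.mpr hi', h2⟩
  -- partner choice function
  have hchoice : ∀ j, ∃ p, (j ∈ S → p < k+l ∧ W (k+l+j) = W p) := by
    intro j
    by_cases h : j ∈ S
    · obtain ⟨hk, i', hi', heq⟩ := (hSmem j).mp h
      exact ⟨i', fun _ => ⟨hi', heq⟩⟩
    · exact ⟨0, fun hc => absurd hc h⟩
  set pt : ℕ → ℕ := fun j => Classical.choose (hchoice j) with hptdef
  have hpt : ∀ j ∈ S, pt j < k+l ∧ W (k+l+j) = W (pt j) :=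
    fun j hj => Classical.choose_spec (hchoice j) hj
  -- upper bound on S.card
  have hupper : 2 * S.card ≤ k + l := by
    have hpw := pairs_window hN0 hx hτ s (2*k+l) (by omega) (by omega) (by omega)
      S (fun j => W (k+l+j))
      (by
        intro a ha b hb hab
        simp only [Finset.mem_coe] at ha hb
        by_contra hne
        exact hslots a b ((hSmem a).mp ha).1 ((hSmem b).mp hb).1 hne hab)
      pt (fun j => k+l+j)
      (by
        intro j hj
        obtain ⟨h1, h2⟩ := hpt j hj
        have hjk : j < k := ((hSmem j).mp hj).1
        exact ⟨by omega, by omega, h2.symm, rfl⟩)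
    omega
  -- lower bound on S.card via alphabet size
  have hlower : k + l ≤ 2 * S.card + 1 := by
    have hsum : (Finset.range (2*k+l)).card
        = ∑ c ∈ (Finset.range (2*k+l)).image W,
            ((Finset.range (2*k+l)).filter (fun n => W n = c)).card :=
      Finset.card_eq_sum_card_image W _
    have hbound : ∀ c ∈ (Finset.range (2*k+l)).image W,
        ((Finset.range (2*k+l)).filter (fun n => W n = c)).card
          ≤ 1 + (if c ∈ S.image (fun j => W (k+l+j)) then 1 else 0) := by
      intro c hc
      by_cases h2 : ((Finset.range (2*k+l)).filter (fun n => W n = c)).card ≤ 1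
      · split_ifs <;> omega
      · push_neg at h2
        obtain ⟨p, hp, q, hq, hpq⟩ := Finset.one_lt_card.mp h2
        simp only [Finset.mem_filter, Finset.mem_range] at hp hq
        have key : ∀ p q : ℕ, p < 2*k+l → q < 2*k+l → W p = c → W q = c → p < q →
            c ∈ S.image (fun j => W (k+l+j)) ∧
            ((Finset.range (2*k+l)).filter (fun n => W n = c)).card ≤ 2 := by
          intro p q hp1 hq1 hp2 hq2 hlt
          have hpk : p < k + l := by
            by_contra hc1
            push_neg at hc1
            have := hnear p (q - p) (by omega) (by omega)
            rw [show p + (q-p) = q by omega] at this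
            exact this (hq2.trans hp2.symm)
          have hqk : k + l ≤ q := by
            by_contra hc1
            push_neg at hc1
            exact absurd (hrun' p q hpk hc1 (hp2.trans hq2.symm)) (by omega)
          have hjS : q - (k+l) ∈ S := by
            rw [hSmem]
            refine ⟨by omega, p, hpk, ?_⟩
            rw [show k+l+(q-(k+l)) = q by omega]
            exact hq2.trans hp2.symm
          constructor
          · exact Finset.mem_image.mpr ⟨q - (k+l), hjS, by
              rw [show k+l+(q-(k+l)) = q by omega]; exact hq2⟩
          · have hsub : (Finset.range (2*k+l)).filter (fun n => W n = c) ⊆ {p, q} := by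
              intro n hn
              simp only [Finset.mem_filter, Finset.mem_range] at hn
              obtain ⟨hn1, hn2⟩ := hn
              simp only [Finset.mem_insert, Finset.mem_singleton]
              by_contra hc2
              push_neg at hc2
              obtain ⟨hnp, hnq⟩ := hc2
              rcases Nat.lt_or_ge n (k+l) with h | h
              · exact hnp (hrun' n p h hpk (hn2.trans hp2.symm))
              · rcases Nat.lt_or_ge n q with h' | h'
                · have := hnear n (q - n) (by omega) (by omega)
                  rw [show n + (q-n) = q by omega] at this
                  exact this (hq2.trans hn2.symm)
                · rcases Nat.lt_or_ge q n with h'' | h''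
                  · have := hnear q (n - q) (by omega) (by omega)
                    rw [show q + (n-q) = n by omega] at this
                    exact this (hn2.trans hq2.symm)
                  · exact hnq (by omega)
            calc ((Finset.range (2*k+l)).filter (fun n => W n = c)).card
                ≤ ({p, q} : Finset ℕ).card := Finset.card_le_card hsub
              _ ≤ 2 := (Finset.card_insert_le ..).trans (by simp)
        rcases Nat.lt_or_ge p q with hlt | hge
        · have hk2 := key p q hp.1 hq.1 hp.2 hq.2 hlt
          split_ifs with hm
          · omega
          · exact absurd hk2.1 hm
        · have hk2 := key q p hq.1 hp.1 hq.2 hp.2 (by omega)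
          split_ifs with hm
          · omega
          · exact absurd hk2.1 hm
    have himg : ((Finset.range (2*k+l)).image W).card ≤ d := by
      calc ((Finset.range (2*k+l)).image W).card ≤ Fintype.card (Fin d) :=
        (Finset.card_le_univ _).trans (by simp)
      _ = d := by simp
    have hsum2 : ∑ c ∈ (Finset.range (2*k+l)).image W,
        ((Finset.range (2*k+l)).filter (fun n => W n = c)).card
        ≤ ∑ c ∈ (Finset.range (2*k+l)).image W,
          (1 + (if c ∈ S.image (fun j => W (k+l+j)) then 1 else 0)) :=
      Finset.sum_le_sum hbound
    have hsum3 : ∑ c ∈ (Finset.range (2*k+l)).image W,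
        (1 + (if c ∈ S.image (fun j => W (k+l+j)) then 1 else 0))
        ≤ ((Finset.range (2*k+l)).image W).card + S.card := by
      rw [Finset.sum_add_distrib]
      have e2 : ∑ c ∈ (Finset.range (2*k+l)).image W,
          (if c ∈ S.image (fun j => W (k+l+j)) then 1 else 0)
          ≤ S.card := by
        rw [← Finset.card_filter]
        calc (((Finset.range (2*k+l)).image W).filter
              (· ∈ S.image (fun j => W (k+l+j)))).card
            ≤ (S.image (fun j => W (k+l+j))).card :=
              Finset.card_le_card (fun c hc => (Finset.mem_filter.mp hc).2)
          _ ≤ S.card := Finset.card_image_le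
      simp only [Finset.sum_const, smul_eq_mul, mul_one]
      omega
    have hfinal : 2*k+l ≤ d + S.card := by
      have hr := Finset.card_range (2*k+l)
      omega
    omega
  have hScard : 2 * S.card = k + l - 1 := by omega
  -- sorted enumeration of S
  set jN : ℕ → ℕ := fun m => if h : m < S.card then ((S.orderIsoOfFin rfl) ⟨m, h⟩ : ℕ) else 0
    with hjNdef
  have hjmem : ∀ m, m < S.card → jN m ∈ S := by
    intro m hm
    rw [hjNdef]
    simp only [hm, dif_pos]
    exact ((S.orderIsoOfFin rfl) ⟨m, hm⟩).2
  have hjmono : ∀ m m', m < m' → m' < S.card → jN m < jN m' := by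
    intro m m' hmm hm'
    have hm : m < S.card := by omega
    rw [hjNdef]
    simp only [hm, hm', dif_pos]
    have : (S.orderIsoOfFin rfl) ⟨m, hm⟩ < (S.orderIsoOfFin rfl) ⟨m', hm'⟩ :=
      (S.orderIsoOfFin rfl).lt_iff_lt.mpr (by exact Fin.mk_lt_mk.mpr hmm)
    exact this
  have hjsurj : ∀ j ∈ S, ∃ m, m < S.card ∧ jN m = j := by
    intro j hj
    obtain ⟨mf, hmf⟩ := (S.orderIsoOfFin rfl).surjective ⟨j, hj⟩
    refine ⟨mf.1, mf.2, ?_⟩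
    rw [hjNdef]
    simp only [mf.2, dif_pos]
    rw [show (⟨mf.1, mf.2⟩ : Fin S.card) = mf from rfl, hmf]
  have hjlt : ∀ m, m < S.card → jN m < k := fun m hm => ((hSmem _).mp (hjmem m hm)).1
  set pN : ℕ → ℕ := fun m => pt (jN m) with hpNdef
  have hplt : ∀ m, m < S.card → pN m < k+l := fun m hm => (hpt _ (hjmem m hm)).1
  have hpeqW : ∀ m, m < S.card → W (k+l+jN m) = W (pN m) := fun m hm => (hpt _ (hjmem m hm)).2
  have hpoff : ∀ m, m < S.card → pN m = jN m + 1 ∨ (l = 3 ∧ pN m = jN m + 2) :=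
    fun m hm => hpartner (jN m) (pN m) (hjlt m hm) (hplt m hm) (hpeqW m hm)
  have hjinj : ∀ m m', m < S.card → m' < S.card → jN m = jN m' → m = m' := by
    intro m m' hm hm' heq
    rcases Nat.lt_trichotomy m m' with h | h | h
    · exact absurd heq (Nat.ne_of_lt (hjmono m m' h hm'))
    · exact h
    · exact absurd heq.symm (Nat.ne_of_lt (hjmono m' m h hm))
  have hpletters : ∀ m m', m < S.card → m' < S.card → W (pN m) = W (pN m') → m = m' := by
    intro m m' hm hm' heq
    have h1 : W (k+l+jN m) = W (k+l+jN m') := by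
      rw [hpeqW m hm, hpeqW m' hm', heq]
    by_contra hne
    exact hslots _ _ (hjlt m hm) (hjlt m' hm') (fun hc => hne (hjinj m m' hm hm' hc)) h1
  have hpmono : ∀ m m', m < m' → m' < S.card → pN m < pN m' := by
    intro m m' hmm hm'
    have hm : m < S.card := by omega
    have h1 := hpoff m hm
    have h2 := hpoff m' hm'
    have h3 := hjmono m m' hmm hm'
    have h4 : pN m ≤ pN m' := by omega
    rcases Nat.lt_or_ge (pN m) (pN m') with h | h
    · exact h
    · have : pN m = pN m' := by omega
      exact absurd (hpletters m m' hm hm' (by rw [this])) (by omega)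
  -- the four families of window inequalities
  have hA : ∀ a b, a ≤ b → b < S.card → pN a + 2*(b-a) + 1 ≤ l + jN b := by
    intro a b hab hb
    have ha : a < S.card := by omega
    have hpa := hpoff a ha
    have hja := hjlt a ha
    have hjb := hjlt b hb
    have hjab : jN a ≤ jN b := by
      rcases Nat.eq_or_lt_of_le hab with rfl | h
      · omega
      · exact le_of_lt (hjmono a b h hb)
    have hpw := pairs_window hN0 hx hτ (s + ((pN a : ℕ) : ZMod (4*k+2*l)))
      (k+l+jN b+1 - pN a) (by omega) (by omega) (by omega)
      (Finset.Icc a b) (fun m => W (pN m))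
      (by
        intro m1 hm1 m2 hm2 heq
        simp only [Finset.coe_Icc, Set.mem_Icc] at hm1 hm2
        exact hpletters m1 m2 (by omega) (by omega) heq)
      (fun m => pN m - pN a) (fun m => k+l+jN m - pN a)
      (by
        intro m hm
        simp only [Finset.mem_Icc] at hm
        have hmlt : m < S.card := by omega
        have hple : pN a ≤ pN m := by
          rcases Nat.eq_or_lt_of_le hm.1 with rfl | h
          · omega
          · exact le_of_lt (hpmono a m h hmlt)
        have hjle : jN m ≤ jN b := by
          rcases Nat.eq_or_lt_of_le hm.2 with rfl | h
          · omega
          · exact le_of_lt (hjmono m b h hb)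
        have hpm := hplt m hmlt
        refine ⟨by omega, by omega, ?_, ?_⟩
        · rw [hWadd, show pN a + (pN m - pN a) = pN m by omega]
        · rw [hWadd, show pN a + (k+l+jN m - pN a) = k+l+jN m by omega]
          exact hpeqW m hmlt)
    rw [Nat.card_Icc] at hpw
    omega
  have hB : ∀ a b, a ≤ b → b < S.card → jN a + 2*(b-a) + 1 ≤ pN b := by
    intro a b hab hb
    have ha : a < S.card := by omega
    have hja := hjlt a ha
    have hpb := hplt b hb
    have hpb1 := hpoff b hb
    have hjab : jN a ≤ jN b := by
      rcases Nat.eq_or_lt_of_le hab with rfl | h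
      · omega
      · exact le_of_lt (hjmono a b h hb)
    have hpw := pairs_window hN0 hx hτ (s + (((k+l+jN a) : ℕ) : ZMod (4*k+2*l)))
      (k + pN b + 1 - jN a) (by omega) (by omega) (by omega)
      (Finset.Icc a b) (fun m => W (pN m))
      (by
        intro m1 hm1 m2 hm2 heq
        simp only [Finset.coe_Icc, Set.mem_Icc] at hm1 hm2
        exact hpletters m1 m2 (by omega) (by omega) heq)
      (fun m => jN m - jN a) (fun m => k + pN m - jN a)
      (by
        intro m hm
        simp only [Finset.mem_Icc] at hm
        have hmlt : m < S.card := by omega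
        have hjle : jN a ≤ jN m := by
          rcases Nat.eq_or_lt_of_le hm.1 with rfl | h
          · omega
          · exact le_of_lt (hjmono a m h hmlt)
        have hple : pN m ≤ pN b := by
          rcases Nat.eq_or_lt_of_le hm.2 with rfl | h
          · omega
          · exact le_of_lt (hpmono m b h hb)
        have hpm := hplt m hmlt
        have hpm1 := hpoff m hmlt
        refine ⟨by omega, by omega, ?_, ?_⟩
        · rw [hWadd, show (k+l+jN a) + (jN m - jN a) = k+l+jN m by omega]
          exact hpeqW m hmlt
        · rw [hWadd, show (k+l+jN a) + (k + pN m - jN a) = pN m + (2*k+l) by omega, hper])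
    rw [Nat.card_Icc] at hpw
    omega
  have hScard' : 2 * S.card = k + l - 1 := hScard
  have hC : ∀ a b, b < a → a < S.card → pN a ≤ pN b + 2*(a-b) := by
    intro a b hba ha
    have hb : b < S.card := by omega
    have hpa := hplt a ha
    have hpb := hplt b hb
    have hpab : pN b < pN a := hpmono b a hba ha
    have hpoffa := hpoff a ha
    have hMcard : ((Finset.Icc a (S.card - 1)) ∪ (Finset.Icc 0 b)).card
        = (S.card - a) + (b + 1) := by
      rw [Finset.card_union_of_disjoint (by
        rw [Finset.disjoint_left]
        intro m hm1 hm2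
        simp only [Finset.mem_Icc] at hm1 hm2
        omega)]
      rw [Nat.card_Icc, Nat.card_Icc]
      omega
    have hpw := pairs_window hN0 hx hτ (s + ((pN a : ℕ) : ZMod (4*k+2*l)))
      ((2*k+l) + pN b + 1 - pN a) (by omega) (by omega) (by omega)
      ((Finset.Icc a (S.card - 1)) ∪ (Finset.Icc 0 b)) (fun m => W (pN m))
      (by
        intro m1 hm1 m2 hm2 heq
        simp only [Finset.coe_union, Finset.coe_Icc, Set.mem_union, Set.mem_Icc] at hm1 hm2
        exact hpletters m1 m2 (by omega) (by omega) heq)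
      (fun m => if m ≤ b then k+l+jN m - pN a else pN m - pN a)
      (fun m => if m ≤ b then (2*k+l) + pN m - pN a else k+l+jN m - pN a)
      (by
        intro m hm
        simp only [Finset.mem_union, Finset.mem_Icc] at hm
        have hmlt : m < S.card := by omega
        have hpm := hplt m hmlt
        have hjm := hjlt m hmlt
        by_cases hcase : m ≤ b
        · have hple : pN m ≤ pN b := by
            rcases Nat.eq_or_lt_of_le hcase with rfl | h
            · omega
            · exact le_of_lt (hpmono m b h hb)
          simp only [hcase, if_pos]
          refine ⟨by omega, by omega, ?_, ?_⟩
          · rw [hWadd, show pN a + (k+l+jN m - pN a) = k+l+jN m by omega]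
            exact hpeqW m hmlt
          · rw [hWadd, show pN a + ((2*k+l) + pN m - pN a) = pN m + (2*k+l) by omega, hper]
        · have hage : a ≤ m := by omega
          have hple : pN a ≤ pN m := by
            rcases Nat.eq_or_lt_of_le hage with rfl | h
            · omega
            · exact le_of_lt (hpmono a m h hmlt)
          simp only [hcase, if_neg, if_false]
          refine ⟨by omega, by omega, ?_, ?_⟩
          · rw [hWadd, show pN a + (pN m - pN a) = pN m by omega]
          · rw [hWadd, show pN a + (k+l+jN m - pN a) = k+l+jN m by omega]
            exact hpeqW m hmlt)
    rw [hMcard] at hpw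
    omega
  have hD : ∀ a b, b < a → a < S.card → jN a ≤ jN b + 2*(a-b) := by
    intro a b hba ha
    have hb : b < S.card := by omega
    have hja := hjlt a ha
    have hjb := hjlt b hb
    have hjab : jN b < jN a := hjmono b a hba ha
    have hMcard : ((Finset.Icc a (S.card - 1)) ∪ (Finset.Icc 0 b)).card
        = (S.card - a) + (b + 1) := by
      rw [Finset.card_union_of_disjoint (by
        rw [Finset.disjoint_left]
        intro m hm1 hm2
        simp only [Finset.mem_Icc] at hm1 hm2
        omega)]
      rw [Nat.card_Icc, Nat.card_Icc]
      omega
    have hpw := pairs_window hN0 hx hτ (s + (((k+l+jN a) : ℕ) : ZMod (4*k+2*l)))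
      ((2*k+l) + jN b + 1 - jN a) (by omega) (by omega) (by omega)
      ((Finset.Icc a (S.card - 1)) ∪ (Finset.Icc 0 b)) (fun m => W (pN m))
      (by
        intro m1 hm1 m2 hm2 heq
        simp only [Finset.coe_union, Finset.coe_Icc, Set.mem_union, Set.mem_Icc] at hm1 hm2
        exact hpletters m1 m2 (by omega) (by omega) heq)
      (fun m => if m ≤ b then k + pN m - jN a else jN m - jN a)
      (fun m => if m ≤ b then (2*k+l) + jN m - jN a else k + pN m - jN a)
      (by
        intro m hm
        simp only [Finset.mem_union, Finset.mem_Icc] at hm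
        have hmlt : m < S.card := by omega
        have hpm := hplt m hmlt
        have hjm := hjlt m hmlt
        have hpoffm := hpoff m hmlt
        by_cases hcase : m ≤ b
        · have hjle : jN m ≤ jN b := by
            rcases Nat.eq_or_lt_of_le hcase with rfl | h
            · omega
            · exact le_of_lt (hjmono m b h hb)
          simp only [hcase, if_pos]
          refine ⟨by omega, by omega, ?_, ?_⟩
          · rw [hWadd, show (k+l+jN a) + (k + pN m - jN a) = pN m + (2*k+l) by omega, hper]
          · rw [hWadd,
              show (k+l+jN a) + ((2*k+l) + jN m - jN a) = (k+l+jN m) + (2*k+l) by omega, hper]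
            exact hpeqW m hmlt
        · have hage : a ≤ m := by omega
          have hjle : jN a ≤ jN m := by
            rcases Nat.eq_or_lt_of_le hage with rfl | h
            · omega
            · exact le_of_lt (hjmono a m h hmlt)
          simp only [hcase, if_neg, if_false]
          refine ⟨by omega, by omega, ?_, ?_⟩
          · rw [hWadd, show (k+l+jN a) + (jN m - jN a) = k+l+jN m by omega]
            exact hpeqW m hmlt
          · rw [hWadd, show (k+l+jN a) + (k + pN m - jN a) = pN m + (2*k+l) by omega, hper])
    rw [hMcard] at hpw
    omega
  have hrr3 : 3 ≤ S.card := by omega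
  -- basic identities
  have hj00 : jN 0 = 0 ∧ pN 0 = 1 := by
    have h1 := hA 0 (S.card - 1) (by omega) (by omega)
    have h2 := hjlt (S.card - 1) (by omega)
    have h3 := hpoff 0 (by omega)
    omega
  have hjlow : ∀ m, m < S.card → 2*m + 2 ≤ l + jN m := by
    intro m hm
    have h1 := hA 0 m (by omega) hm
    omega
  have hjhigh : ∀ m, m < S.card → jN m ≤ 2*m := by
    intro m hm
    rcases Nat.eq_zero_or_pos m with rfl | hpos
    · omega
    · have := hD m 0 hpos hm
      omega
  -- failure propagation (l = 3)
  have hfail : ∀ q m, 1 ≤ m → m + q < S.card → jN m = 2*m - 1 → jN (m+q) = 2*(m+q) - 1 := by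
    intro q
    induction q with
    | zero => intro m _ _ h; simpa using h
    | succ q ih =>
        intro m hm1 hmq h
        have hprev : jN (m+q) = 2*(m+q) - 1 := ih m hm1 (by omega) h
        have h1 := hD (m+q+1) (m+q) (by omega) (by omega)
        have h2 := hjlow (m+q+1) (by omega)
        have h3 := hjhigh (m+q+1) (by omega)
        have h4 := hjmono (m+q) (m+q+1) (by omega) (by omega)
        rw [show m + (q+1) = m+q+1 by omega]
        omega
  -- the classification bundle
  have hfin : ∃ t, (l = 2 → 2*t+1 = k) ∧ (l = 3 → 2*t+2 ≤ k) ∧ t + 1 ≤ S.card ∧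
      (∀ m, m < S.card → pN m = 2*m+1) ∧
      (∀ m, m < S.card → (m ≤ t → jN m = 2*m) ∧ (t < m → jN m = 2*m - 1)) := by
    rcases hl23 with hl2 | hl3
    · -- l = 2 : everything rigid
      refine ⟨S.card - 1, by omega, by omega, by omega, ?_, ?_⟩
      · intro m hm
        have h1 := hjlow m hm
        have h2 := hjhigh m hm
        have h3 := hpoff m hm
        omega
      · intro m hm
        have h1 := hjlow m hm
        have h2 := hjhigh m hm
        constructor
        · intro _; omega
        · intro hgt; omega
    · -- l = 3
      set t := Nat.findGreatest (fun m => jN m = 2*m) (S.card - 1) with htdef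
      have ht1 : jN t = 2*t := by
        have := Nat.findGreatest_spec (P := fun m => jN m = 2*m) (m := 0) (n := S.card - 1)
          (by omega) (by omega)
        exact this
      have ht2 : t ≤ S.card - 1 := Nat.findGreatest_le _
      have htgr : ∀ m, t < m → m ≤ S.card - 1 → jN m ≠ 2*m := by
        intro m hm1 hm2
        exact Nat.findGreatest_is_greatest (P := fun m => jN m = 2*m) hm1 hm2
      have hlast : jN (S.card - 1) = 2*(S.card - 1) - 1 := by
        have h1 := hjlow (S.card - 1) (by omega)
        have h2 := hjlt (S.card - 1) (by omega)
        omega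
      have htne : t ≠ S.card - 1 := by
        intro hc
        rw [hc, hlast] at ht1
        omega
      -- jN formula
      have hjform : ∀ m, m < S.card → (m ≤ t → jN m = 2*m) ∧ (t < m → jN m = 2*m - 1) := by
        intro m hm
        constructor
        · intro hle
          by_contra hc
          have hm1 : 1 ≤ m := by
            rcases Nat.eq_zero_or_pos m with rfl | h
            · omega
            · exact h
          have hmval : jN m = 2*m - 1 := by
            have h1 := hjlow m hm
            have h2 := hjhigh m hm
            omega
          have := hfail (t - m) m hm1 (by omega) hmval
          rw [show m + (t-m) = t by omega] at this
          omega
        · intro hgt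
          have h1 := hjlow m hm
          have h2 := hjhigh m hm
          have := htgr m hgt (by omega)
          omega
      refine ⟨t, by omega, ?_, by omega, ?_, hjform⟩
      · -- 2t+2 ≤ k
        omega
      · -- pN formula
        -- first: pN m = 2m+1 for m ≤ t by upward induction
        have hup : ∀ m, m ≤ t → pN m = 2*m+1 := by
          intro m
          induction m with
          | zero => intro _; omega
          | succ m ih =>
              intro hle
              have hm1 : m + 1 < S.card := by omega
              have hjm := (hjform m (by omega)).1 (by omega)
              have hjm1 := (hjform (m+1) hm1).1 hle
              have h1 := hC (m+1) m (by omega) hm1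
              have h2 := hpoff (m+1) hm1
              have h3 := ih (by omega)
              omega
        -- top: pN (S.card - 1) = 2(S.card-1)+1
        have htop : pN (S.card - 1) = 2*(S.card - 1) + 1 := by
          have h1 := hB 0 (S.card - 1) (by omega) (by omega)
          have h2 := hpoff (S.card - 1) (by omega)
          have h3 := hlast
          omega
        -- downward induction for m > t
        have hdown : ∀ q m, t < m → m + q = S.card - 1 → pN m = 2*m+1 := by
          intro q
          induction q with
          | zero => intro m _ hmq; rw [show m = S.card - 1 by omega]; exact htop
          | succ q ih =>
              intro m hm1 hmq
              have hnext : pN (m+1) = 2*(m+1)+1 := ih (m+1) (by omega) (by omega)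
              have hjm := (hjform m (by omega)).2 hm1
              have h1 := hC (m+1) m (by omega) (by omega)
              have h2 := hpoff m (by omega)
              omega
        intro m hm
        rcases le_or_gt m t with h | h
        · exact hup m h
        · exact hdown (S.card - 1 - m) m h (by omega)
  obtain ⟨t, htl2, htl3, htS, hpform, hjform⟩ := hfin
  -- S characterization
  have hsiff : ∀ j, j < k → (j ∈ S ↔ ((j % 2 = 0 ∧ j ≤ 2*t) ∨ (j % 2 = 1 ∧ 2*t+1 ≤ j))) := by
    intro j hj
    constructor
    · intro hjS
      obtain ⟨m, hm, rfl⟩ := hjsurj j hjS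
      rcases le_or_gt m t with h | h
      · left
        have := (hjform m hm).1 h
        omega
      · right
        have := (hjform m hm).2 h
        omega
    · intro hcase
      rcases hcase with ⟨he, hle⟩ | ⟨ho, hge⟩
      · have hm : j / 2 < S.card := by omega
        have := (hjform (j/2) hm).1 (by omega)
        have hmem := hjmem (j/2) hm
        rw [show jN (j/2) = j by omega] at hmem
        exact hmem
      · rcases hl23 with hl2 | hl3
        · omega
        · have hm : (j+1)/2 < S.card := by omega
          have hgt : t < (j+1)/2 := by omega
          have := (hjform ((j+1)/2) hm).2 hgt
          have hmem := hjmem ((j+1)/2) hm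
          rw [show jN ((j+1)/2) = j by omega] at hmem
          exact hmem
  have hpairW : ∀ m, m < S.card → W (k+l+jN m) = W (2*m+1) := by
    intro m hm
    rw [hpeqW m hm, hpform m hm]
  -- letterOf computations
  have hlet_run : ∀ n, n < k+l → letterOf k l t n = n := by
    intro n hn
    unfold letterOf
    rw [if_pos hn]
  have hlet_slot : ∀ j, j < k →
      letterOf k l t (k+l+j) = (if j % 2 = 0 ∧ j ≤ 2*t then j+1
        else if j % 2 = 1 ∧ 2*t+1 ≤ j then j+2 else k+l+j) := by
    intro j hj
    unfold letterOf
    rw [if_neg (by omega), show k+l+j-(k+l) = j from by omega]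
  -- forward direction
  have hfwd : ∀ a b, a < b → b < 2*k+l → W a = W b →
      letterOf k l t a = letterOf k l t b := by
    intro a b hab hb heq
    rcases Nat.lt_or_ge b (k+l) with hbk | hbk
    · exact absurd (hrun' a b (by omega) hbk heq) (by omega)
    · have hak : a < k+l := by
        by_contra hc
        push_neg at hc
        have := hnear a (b - a) (by omega) (by omega)
        rw [show a + (b-a) = b by omega] at this
        exact this heq.symm
      set j := b - (k+l) with hjdef
      have hjk : j < k := by omega
      have hjS : j ∈ S := by
        rw [hSmem]
        exact ⟨hjk, a, hak, by rw [show k+l+j = b by omega]; exact heq.symm⟩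
      obtain ⟨m, hm, hjm⟩ := hjsurj j hjS
      have hapm : a = 2*m+1 := by
        apply hrun' a (2*m+1) hak (by have := hjlt m hm; omega)
        rw [← hpform m hm, ← hpeqW m hm, hjm, show k+l+j = b by omega]
        exact heq
      rw [hlet_run a hak, show b = k+l+j by omega, hlet_slot j hjk]
      rcases le_or_gt m t with h | h
      · have hje := (hjform m hm).1 h
        rw [if_pos (by omega)]
        omega
      · have hjo := (hjform m hm).2 h
        rw [if_neg (by omega), if_pos (by omega)]
        omega
  -- backward direction
  have hbwd : ∀ a b, a < b → b < 2*k+l → letterOf k l t a = letterOf k l t b →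
      W a = W b := by
    intro a b hab hb heq
    rcases Nat.lt_or_ge b (k+l) with hbk | hbk
    · rw [hlet_run a (by omega), hlet_run b hbk] at heq
      omega
    · set j := b - (k+l) with hjdef
      have hjk : j < k := by omega
      have hbval : b = k+l+j := by omega
      rcases Nat.lt_or_ge a (k+l) with hak | hak
      · rw [hlet_run a hak, hbval, hlet_slot j hjk] at heq
        by_cases hc1 : j % 2 = 0 ∧ j ≤ 2*t
        · rw [if_pos hc1] at heq
          have hm : j / 2 < S.card := by omega
          have hje := (hjform (j/2) hm).1 (by omega)
          have hkey : W (k+l+j) = W (2*(j/2)+1) := by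
            have hpw := hpairW (j/2) hm
            rw [hje] at hpw
            rw [show k+l+j = k+l+2*(j/2) by omega]
            exact hpw
          rw [hbval, hkey, show a = 2*(j/2)+1 by omega]
        · rw [if_neg hc1] at heq
          by_cases hc2 : j % 2 = 1 ∧ 2*t+1 ≤ j
          · rw [if_pos hc2] at heq
            rcases hl23 with hl2 | hl3
            · omega
            · have hm : (j+1)/2 < S.card := by omega
              have hje := (hjform ((j+1)/2) hm).2 (by omega)
              have hkey : W (k+l+j) = W (2*((j+1)/2)+1) := by
                have hpw := hpairW ((j+1)/2) hm
                rw [hje] at hpw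
                rw [show k+l+j = k+l+(2*((j+1)/2) - 1) by omega]
                exact hpw
              rw [hbval, hkey, show a = 2*((j+1)/2)+1 by omega]
          · rw [if_neg hc2] at heq
            omega
      · -- both slots
        set j' := a - (k+l) with hj'def
        have hj'k : j' < k := by omega
        have haval : a = k+l+j' := by omega
        rw [haval, hbval, hlet_slot j' hj'k, hlet_slot j hjk] at heq
        have hjj' : j' ≠ j := by omega
        exfalso
        have hv : ∀ jj : ℕ, ((if jj % 2 = 0 ∧ jj ≤ 2*t then jj+1
            else if jj % 2 = 1 ∧ 2*t+1 ≤ jj then jj+2 else k+l+jj) = jj + 1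
              ∧ jj % 2 = 0 ∧ jj ≤ 2*t)
          ∨ ((if jj % 2 = 0 ∧ jj ≤ 2*t then jj+1
            else if jj % 2 = 1 ∧ 2*t+1 ≤ jj then jj+2 else k+l+jj) = jj + 2
              ∧ jj % 2 = 1 ∧ 2*t+1 ≤ jj)
          ∨ ((if jj % 2 = 0 ∧ jj ≤ 2*t then jj+1
            else if jj % 2 = 1 ∧ 2*t+1 ≤ jj then jj+2 else k+l+jj) = k+l+jj
              ∧ ¬(jj % 2 = 0 ∧ jj ≤ 2*t) ∧ ¬(jj % 2 = 1 ∧ 2*t+1 ≤ jj)) := by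
          intro jj
          split_ifs with h1 h2
          · exact Or.inl ⟨rfl, h1⟩
          · exact Or.inr (Or.inl ⟨rfl, h2⟩)
          · exact Or.inr (Or.inr ⟨rfl, h1, h2⟩)
        rcases hv j' with ⟨e1, f1⟩ | ⟨e1, f1⟩ | ⟨e1, f1, g1⟩ <;>
          rcases hv j with ⟨e2, f2⟩ | ⟨e2, f2⟩ | ⟨e2, f2, g2⟩ <;>
          rw [e1, e2] at heq <;> omega
  refine ⟨t, htl2, htl3, ?_⟩
  intro a b ha hb
  show W a = W b ↔ _
  constructor
  · intro heq
    rcases Nat.lt_trichotomy a b with h | h | h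
    · exact hfwd a b h hb heq
    · rw [h]
    · exact (hfwd b a h ha heq.symm).symm
  · intro heq
    rcases Nat.lt_trichotomy a b with h | h | h
    · exact hbwd a b h hb heq
    · rw [h]
    · exact (hbwd b a h ha heq.symm).symm




end Anchored

def psi (k l v : ℕ) : ℕ :=
  if v = 0 then (2*k+l) - 2 else if v = 1 then k+1 else if v = k+l+1 then k+l-1 else v - 2

lemma letterOf_range (k l t n : ℕ) (hl : l = 2 ∨ l = 3) (hk : 4 ≤ k) (hn : n < 2*k+l) :
    letterOf k l t n < 2*k+l ∧ letterOf k l t n ≠ k+l := by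
  unfold letterOf
  split_ifs <;> omega

lemma psi_inj (k l : ℕ) (hl3 : l = 3) (hk : 4 ≤ k) (v v' : ℕ)
    (hv : v < 2*k+l) (hv' : v' < 2*k+l) (h1 : v ≠ k+l) (h2 : v' ≠ k+l)
    (heq : psi k l v = psi k l v') : v = v' := by
  unfold psi at heq
  split_ifs at heq <;> omega

set_option maxHeartbeats 4000000 in
lemma shift_eq (k l u : ℕ) (hl3 : l = 3) (hke : k % 2 = 0) (hk4 : 4 ≤ k)
    (hu : 2*u + 4 ≤ k) (n : ℕ) (hn : n < 2*k+l) :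
    letterOf k l u ((n + (2*k+l) - 2) % (2*k+l)) = psi k l (letterOf k l (u+1) n) := by
  rcases Nat.lt_or_ge n 2 with h2 | h2
  · rw [Nat.mod_eq_of_lt (by omega)]
    unfold letterOf psi
    split_ifs <;> (try contradiction) <;> omega
  · rw [show n + (2*k+l) - 2 = (n-2) + (2*k+l) by omega, Nat.add_mod_right,
      Nat.mod_eq_of_lt (by omega)]
    unfold letterOf psi
    split_ifs <;> (try contradiction) <;> omega

lemma shift_iff (k l u : ℕ) (hl3 : l = 3) (hke : k % 2 = 0) (hk4 : 4 ≤ k)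
    (hu : 2*u + 4 ≤ k) (n m : ℕ) (hn : n < 2*k+l) (hm : m < 2*k+l) :
    letterOf k l (u+1) n = letterOf k l (u+1) m ↔
      letterOf k l u ((n + (2*k+l) - 2) % (2*k+l))
        = letterOf k l u ((m + (2*k+l) - 2) % (2*k+l)) := by
  rw [shift_eq k l u hl3 hke hk4 hu n hn, shift_eq k l u hl3 hke hk4 hu m hm]
  constructor
  · intro h; rw [h]
  · intro h
    have r1 := letterOf_range k l (u+1) n (Or.inr hl3) hk4 hn
    have r2 := letterOf_range k l (u+1) m (Or.inr hl3) hk4 hm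
    exact psi_inj k l hl3 hk4 _ _ r1.1 r2.1 r1.2 r2.2 h

lemma chain_iff (k l : ℕ) (hl3 : l = 3) (hke : k % 2 = 0) (hk4 : 4 ≤ k) :
    ∀ q u, 2*(u+q) + 2 ≤ k → ∀ n m, n < 2*k+l → m < 2*k+l →
    (letterOf k l (u+q) n = letterOf k l (u+q) m ↔
      letterOf k l u ((n + ((2*k+l) - 2)*q) % (2*k+l))
        = letterOf k l u ((m + ((2*k+l) - 2)*q) % (2*k+l))) := by
  intro q
  induction q with
  | zero =>
      intro u hu n m hn hm
      simp only [Nat.mul_zero, Nat.add_zero]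
      rw [Nat.mod_eq_of_lt hn, Nat.mod_eq_of_lt hm]
  | succ q ih =>
      intro u hu n m hn hm
      have hstep := shift_iff k l (u+q) hl3 hke hk4 (by omega) n m hn hm
      rw [show u + (q+1) = (u+q) + 1 by omega, hstep]
      have hmod : ∀ a : ℕ, ((a + (2*k+l) - 2) % (2*k+l) + ((2*k+l) - 2)*q) % (2*k+l)
          = (a + ((2*k+l)-2)*(q+1)) % (2*k+l) := by
        intro a
        conv_rhs => rw [show a + ((2*k+l)-2)*(q+1) = (a + (2*k+l) - 2) + ((2*k+l)-2)*q by
          rw [Nat.mul_succ]; omega]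
        rw [Nat.add_mod, Nat.mod_mod_of_dvd]
        · rw [← Nat.add_mod]
        · exact dvd_refl _
      rw [← hmod n, ← hmod m]
      exact ih u (by omega) _ _ (Nat.mod_lt _ (by omega)) (Nat.mod_lt _ (by omega))

/-- extend a pattern equivalence to a permutation -/
lemma perm_of_pattern {α β : Type*} [Fintype β] [DecidableEq β] (f g : α → β)
    (h : ∀ a b, f a = f b ↔ g a = g b) :
    ∃ π : Equiv.Perm β, ∀ a, g a = π (f a) := by
  classical
  set A : Set β := Set.range f with hA
  set B : Set β := Set.range g with hB
  have hF : ∀ y : A, g (Classical.choose y.2) ∈ B := fun y => ⟨_, rfl⟩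
  set F : A → B := fun y => ⟨g (Classical.choose y.2), hF y⟩ with hFdef
  have hFbij : Function.Bijective F := by
    constructor
    · intro y y' heq
      have h1 : f (Classical.choose y.2) = (y : β) := Classical.choose_spec y.2
      have h2 : f (Classical.choose y'.2) = (y' : β) := Classical.choose_spec y'.2
      have h3 : g (Classical.choose y.2) = g (Classical.choose y'.2) :=
        congrArg Subtype.val heq
      have h4 := (h _ _).mpr h3
      apply Subtype.ext
      rw [← h1, ← h2, h4]
    · rintro ⟨z, a, rfl⟩
      refine ⟨⟨f a, ⟨a, rfl⟩⟩, ?_⟩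
      apply Subtype.ext
      show g (Classical.choose _) = g a
      apply (h _ _).mp
      exact Classical.choose_spec (⟨a, rfl⟩ : (f a : β) ∈ A)
  set e1 : A ≃ B := Equiv.ofBijective F hFbij with he1
  have hcard : Fintype.card A = Fintype.card B := Fintype.card_congr e1
  have hcardc : Fintype.card (↥Aᶜ) = Fintype.card (↥Bᶜ) := by
    rw [Fintype.card_compl_set, Fintype.card_compl_set, hcard]
  set e2 : (↥Aᶜ) ≃ (↥Bᶜ) := Fintype.equivOfCardEq hcardc with he2
  have hmemc : ∀ y : β, y ∉ A ↔ y ∈ Aᶜ := fun y => Iff.rfl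
  set π : Equiv.Perm β :=
    ((Equiv.sumCompl (· ∈ A)).symm.trans ((e1.sumCongr e2).trans
      (Equiv.sumCompl (· ∈ B)))) with hπ
  refine ⟨π, fun a => ?_⟩
  have hmem : f a ∈ A := ⟨a, rfl⟩
  have hstep1 : (Equiv.sumCompl (· ∈ A)).symm (f a) = Sum.inl ⟨f a, hmem⟩ :=
    Equiv.sumCompl_symm_apply_of_pos (p := (· ∈ A)) hmem
  rw [hπ]
  simp only [Equiv.trans_apply, hstep1, Equiv.sumCongr_apply, Sum.map_inl,
    Equiv.sumCompl_apply_inl]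
  show g a = (e1 ⟨f a, hmem⟩ : β)
  have : (e1 ⟨f a, hmem⟩ : β) = g (Classical.choose hmem) := rfl
  rw [this]
  apply (h _ _).mp
  exact (Classical.choose_spec hmem).symm

/-- Byrnes, Theorem 6 (ii): for `k, l ≥ 2` of opposite parity with `k ≥ 2l+1` if `k`
is odd, `k ≥ 2l-2` if `k` is even, `d = (3k+l+1)/2`, and `l = 2` or `l = 3`, any two
symmetric `(d,k)` circuit codes of maximum length `S(d,k,k+l) = 4k+2l` whose
transition sequences contain a bit run of length `≥ k+l` are isomorphic. -/
theorem stmt_8 (k l d : ℕ) (hk2 : 2 ≤ k) (hl2 : 2 ≤ l) (hpar : k % 2 ≠ l % 2)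
    (hodd : Odd k → 2 * l + 1 ≤ k) (heven : Even k → 2 * l - 2 ≤ k)
    (hd : 2 * d = 3 * k + l + 1) (hl23 : l = 2 ∨ l = 3)
    (x x' : ZMod (4 * k + 2 * l) → Fin d → Bool)
    (hx : IsCircuitCode d k (4 * k + 2 * l) x)
    (hx' : IsCircuitCode d k (4 * k + 2 * l) x')
    (τ τ' : ZMod (4 * k + 2 * l) → Fin d)
    (hτ : IsTransitionSeq x τ) (hτ' : IsTransitionSeq x' τ')
    (hsym : ∀ i : ZMod (4 * k + 2 * l),
      τ (i + ((2 * k + l : ℕ) : ZMod (4 * k + 2 * l))) = τ i)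
    (hsym' : ∀ i : ZMod (4 * k + 2 * l),
      τ' (i + ((2 * k + l : ℕ) : ZMod (4 * k + 2 * l))) = τ' i)
    (hrun : ∃ s : ZMod (4 * k + 2 * l), IsBitRun τ s (k + l))
    (hrun' : ∃ s : ZMod (4 * k + 2 * l), IsBitRun τ' s (k + l)) :
    ∃ (s : ZMod (4 * k + 2 * l)) (π : Equiv.Perm (Fin d)),
      ∀ i : ZMod (4 * k + 2 * l), τ' i = π (τ (i + s)) := by
  classical
  have hkl : (l = 2 ∧ k % 2 = 1 ∧ 5 ≤ k) ∨ (l = 3 ∧ k % 2 = 0 ∧ 4 ≤ k) := by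
    rcases hl23 with h | h
    · left
      have hk1 : k % 2 = 1 := by omega
      have := hodd (Nat.odd_iff.mpr hk1)
      omega
    · right
      have hk0 : k % 2 = 0 := by omega
      have := heven (Nat.even_iff.mpr hk0)
      omega
  have hk4 : 4 ≤ k := by omega
  haveI : NeZero (4*k+2*l) := ⟨by omega⟩
  obtain ⟨s1, hrun1⟩ := hrun
  obtain ⟨s2, hrun2⟩ := hrun'
  obtain ⟨t1, ht1l2, ht1l3, hpat1⟩ := struct_exists hkl hd hx hτ hsym hrun1
  obtain ⟨t2, ht2l2, ht2l3, hpat2⟩ := struct_exists hkl hd hx' hτ' hsym' hrun2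
  -- lift patterns to all of ZMod
  have hlift : ∀ (σf : ZMod (4*k+2*l) → Fin d)
      (hsymf : ∀ i : ZMod (4*k+2*l), σf (i + ((2*k+l : ℕ) : ZMod (4*k+2*l))) = σf i)
      (z : ZMod (4*k+2*l)) (sb : ZMod (4*k+2*l)),
      σf z = σf (sb + (((z - sb).val % (2*k+l) : ℕ) : ZMod (4*k+2*l))) := by
    intro σf hsymf z sb
    have hz : z = sb + (((z - sb).val : ℕ) : ZMod (4*k+2*l)) := by
      rw [ZMod.natCast_zmod_val]
      ring
    conv_lhs => rw [hz]
    set v := (z - sb).val with hv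
    have hsplit : (v : ZMod (4*k+2*l)) = ((v % (2*k+l) : ℕ) : ZMod (4*k+2*l))
        + (((2*k+l) * (v / (2*k+l)) : ℕ) : ZMod (4*k+2*l)) := by
      rw [← Nat.cast_add]
      congr 1
      exact (Nat.mod_add_div v (2*k+l)).symm
    rw [hsplit, ← add_assoc]
    generalize (v / (2*k+l)) = q
    induction q with
    | zero => simp
    | succ q ih =>
        have : ((2*k+l) * (q+1) : ℕ) = ((2*k+l) * q) + (2*k+l) := by ring
        rw [this, Nat.cast_add, ← add_assoc, hsymf]
        exact ih
  have hP0 : 0 < 2*k+l := by omega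
  have hvalmod : ∀ (z : ZMod (4*k+2*l)) (c : ℕ),
      ((z + (c : ZMod (4*k+2*l))).val) % (2*k+l) = (z.val + c) % (2*k+l) := by
    intro z c
    rw [ZMod.val_add, ZMod.val_natCast]
    have hdvd : (2*k+l) ∣ (4*k+2*l) := ⟨2, by ring⟩
    rw [Nat.mod_mod_of_dvd _ hdvd]
    conv_lhs => rw [Nat.add_mod, Nat.mod_mod_of_dvd _ hdvd, ← Nat.add_mod]
  have hpat1' : ∀ z w : ZMod (4*k+2*l), τ z = τ w ↔
      letterOf k l t1 ((z - s1).val % (2*k+l)) = letterOf k l t1 ((w - s1).val % (2*k+l)) := by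
    intro z w
    rw [hlift τ hsym z s1, hlift τ hsym w s1]
    exact hpat1 _ _ (Nat.mod_lt _ hP0) (Nat.mod_lt _ hP0)
  have hpat2' : ∀ z w : ZMod (4*k+2*l), τ' z = τ' w ↔
      letterOf k l t2 ((z - s2).val % (2*k+l)) = letterOf k l t2 ((w - s2).val % (2*k+l)) := by
    intro z w
    rw [hlift τ' hsym' z s2, hlift τ' hsym' w s2]
    exact hpat2 _ _ (Nat.mod_lt _ hP0) (Nat.mod_lt _ hP0)
  rcases Nat.lt_trichotomy t1 t2 with hlt | heqt | hgt
  · -- t1 < t2 : l = 3, chain on τ' side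
    have hl3 : l = 3 := by
      rcases hl23 with h | h
      · exfalso; have := ht1l2 h; have := ht2l2 h; omega
      · exact h
    set c : ℕ := ((2*k+l) - 2) * (t2 - t1) with hc
    set σ : ZMod (4*k+2*l) := s1 - s2 + (c : ZMod (4*k+2*l)) with hσ
    have hch := chain_iff k l hl3 (by omega) hk4 (t2 - t1) t1
      (by have := ht2l3 hl3; omega)
    have hpe : ∀ i j : ZMod (4*k+2*l), τ (i + σ) = τ (j + σ) ↔ τ' i = τ' j := by
      intro i j
      rw [hpat1' (i + σ) (j + σ), hpat2' i j]
      have harg : ∀ w : ZMod (4*k+2*l), ((w + σ - s1).val) % (2*k+l)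
          = (((w - s2).val % (2*k+l)) + ((2*k+l) - 2)*(t2-t1)) % (2*k+l) := by
        intro w
        rw [Nat.mod_add_mod]
        rw [show w + σ - s1 = (w - s2) + (c : ZMod (4*k+2*l)) by rw [hσ]; ring]
        rw [hvalmod]
      rw [harg i, harg j]
      have := hch ((i - s2).val % (2*k+l)) ((j - s2).val % (2*k+l))
        (Nat.mod_lt _ hP0) (Nat.mod_lt _ hP0)
      rw [show t1 + (t2 - t1) = t2 by omega] at this
      exact this.symm
    obtain ⟨π, hπ⟩ := perm_of_pattern (fun i => τ (i + σ)) τ' (fun a b => hpe a b)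
    exact ⟨σ, π, hπ⟩
  · -- t1 = t2
    set σ : ZMod (4*k+2*l) := s1 - s2 with hσ
    have hpe : ∀ i j : ZMod (4*k+2*l), τ (i + σ) = τ (j + σ) ↔ τ' i = τ' j := by
      intro i j
      rw [hpat1' (i + σ) (j + σ), hpat2' i j, heqt]
      have harg : ∀ w : ZMod (4*k+2*l), w + σ - s1 = w - s2 := by
        intro w; rw [hσ]; ring
      rw [harg i, harg j]
    obtain ⟨π, hπ⟩ := perm_of_pattern (fun i => τ (i + σ)) τ' (fun a b => hpe a b)
    exact ⟨σ, π, hπ⟩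
  · -- t2 < t1 : chain on τ side
    have hl3 : l = 3 := by
      rcases hl23 with h | h
      · exfalso; have := ht1l2 h; have := ht2l2 h; omega
      · exact h
    set c : ℕ := ((2*k+l) - 2) * (t1 - t2) with hc
    set σ : ZMod (4*k+2*l) := s1 - s2 - (c : ZMod (4*k+2*l)) with hσ
    have hch := chain_iff k l hl3 (by omega) hk4 (t1 - t2) t2
      (by have := ht1l3 hl3; omega)
    have hpe : ∀ i j : ZMod (4*k+2*l), τ (i + σ) = τ (j + σ) ↔ τ' i = τ' j := by
      intro i j
      rw [hpat1' (i + σ) (j + σ), hpat2' i j]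
      have harg : ∀ w : ZMod (4*k+2*l), (((w + σ - s1).val % (2*k+l)) + ((2*k+l) - 2)*(t1-t2)) % (2*k+l)
          = ((w - s2).val) % (2*k+l) := by
        intro w
        rw [Nat.mod_add_mod]
        rw [show (w - s2) = (w + σ - s1) + (c : ZMod (4*k+2*l)) by rw [hσ]; ring]
        rw [hvalmod]
      have := hch ((i + σ - s1).val % (2*k+l)) ((j + σ - s1).val % (2*k+l))
        (Nat.mod_lt _ hP0) (Nat.mod_lt _ hP0)
      rw [show t2 + (t1 - t2) = t1 by omega] at this
      rw [this, harg i, harg j]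
    obtain ⟨π, hπ⟩ := perm_of_pattern (fun i => τ (i + σ)) τ' (fun a b => hpe a b)
    exact ⟨σ, π, hπ⟩
end

section
/- Let k be an even integer with k ≥ 4, let d = (3k+4)/2, and let C be a symmetric (d,k) circuit code of length 4k+6. Then the transition sequence T(C) contains a bit run of length k+3. -/
namespace CircuitCodeAux

lemma hyp_walk (d : ℕ) : ∀ (n : ℕ) (u v : Fin d → Bool), hammingDist u v = n →
    ∃ w : (hypercube d).Walk u v, w.length = n := by
  intro n
  induction n with
  | zero =>
    intro u v h
    rw [hammingDist_eq_zero] at h; subst h; exact ⟨.nil, rfl⟩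
  | succ n ih =>
    intro u v h
    have hne : u ≠ v := by
      intro e; subst e; simp [hammingDist_self] at h
    have hj : ∃ j, u j ≠ v j := by
      by_contra hc; push_neg at hc; exact hne (funext hc)
    obtain ⟨j, hj⟩ := hj
    set u' := Function.update u j (v j) with hu'
    have hadj : (hypercube d).Adj u u' := by
      show hammingDist u u' = 1
      have hs : (Finset.univ.filter fun i => u i ≠ u' i) = {j} := by
        ext i
        simp only [Finset.mem_filter, Finset.mem_univ, true_and, Finset.mem_singleton]
        constructor
        · intro hi; by_contra hij
          rw [hu', Function.update_of_ne hij] at hi; exact hi rfl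
        · intro e; subst e; rw [hu', Function.update_self]; exact hj
      show (Finset.univ.filter fun i => u i ≠ u' i).card = 1
      rw [hs, Finset.card_singleton]
    have h2 : hammingDist u' v = n := by
      have hset : (Finset.univ.filter fun i => u' i ≠ v i)
          = (Finset.univ.filter fun i => u i ≠ v i).erase j := by
        ext i
        simp only [Finset.mem_filter, Finset.mem_univ, true_and, Finset.mem_erase]
        constructor
        · intro hi
          have hij : i ≠ j := by
            intro e; subst e; rw [hu', Function.update_self] at hi; exact hi rfl
          rw [hu', Function.update_of_ne hij] at hi; exact ⟨hij, hi⟩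
        · rintro ⟨hij, hi⟩; rwa [hu', Function.update_of_ne hij]
      show (Finset.univ.filter fun i => u' i ≠ v i).card = n
      rw [hset, Finset.card_erase_of_mem (by simpa using hj)]
      have : (Finset.univ.filter fun i => u i ≠ v i).card = n + 1 := h
      omega
    obtain ⟨w, hw⟩ := ih u' v h2
    exact ⟨.cons hadj w, by simp [hw]⟩

lemma dist_le_ham (d : ℕ) (u v : Fin d → Bool) :
    (hypercube d).dist u v ≤ hammingDist u v := by
  obtain ⟨w, hw⟩ := hyp_walk d (hammingDist u v) u v rfl
  simpa [hw] using SimpleGraph.dist_le w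

/-- number of occurrences of coordinate `c` in the window of length `m` starting at `i`. -/
def cnt {d N : ℕ} (τ : ZMod N → Fin d) (i : ZMod N) (m : ℕ) (c : Fin d) : ℕ :=
  ((Finset.range m).filter fun t : ℕ => τ (i + (Nat.cast t : ZMod N)) = c).card

lemma sum_cnt {d N : ℕ} (τ : ZMod N → Fin d) (i : ZMod N) (m : ℕ) :
    ∑ c : Fin d, cnt τ i m c = m := by
  unfold cnt
  have h := Finset.card_eq_sum_card_fiberwise (s := Finset.range m)
    (t := (Finset.univ : Finset (Fin d)))
    (f := fun t : ℕ => τ (i + (Nat.cast t : ZMod N))) (fun t _ => Finset.mem_univ _)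
  rw [Finset.card_range] at h
  exact h.symm

lemma bool_ne_iff {a b c : Bool} (h : a ≠ b) : (a = c) ↔ ¬(b = c) := by
  revert h; revert a b c; decide

lemma cnt_succ {d N : ℕ} (τ : ZMod N → Fin d) (i : ZMod N) (m : ℕ) (c : Fin d) :
    cnt τ i (m + 1) c = cnt τ i m c + (if τ (i + (m : ZMod N)) = c then 1 else 0) := by
  unfold cnt
  rw [Finset.range_add_one, Finset.filter_insert]
  split_ifs with h
  · rw [Finset.card_insert_of_notMem (by simp)]
  · simp

lemma flip_iff {d N : ℕ} {x : ZMod N → Fin d → Bool} {τ : ZMod N → Fin d}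
    (hτ : IsTransitionSeq x τ) (i : ZMod N) (m : ℕ) (j : Fin d) :
    x (i + (m : ZMod N)) j = x i j ↔ Even (cnt τ i m j) := by
  induction m with
  | zero => simp [cnt]
  | succ m ih =>
    have harr : i + ((m + 1 : ℕ) : ZMod N) = (i + (m : ZMod N)) + 1 := by
      push_cast; ring
    rw [harr, cnt_succ]
    have hstep := hτ (i + (m : ZMod N)) j
    by_cases hj : τ (i + (m : ZMod N)) = j
    · have hne : x ((i + (m : ZMod N)) + 1) j ≠ x (i + (m : ZMod N)) j :=
        hstep.mpr hj.symm
      rw [bool_ne_iff hne, ih]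
      simp [hj, Nat.even_add_one]
    · have heq : x ((i + (m : ZMod N)) + 1) j = x (i + (m : ZMod N)) j := by
        by_contra hcc
        exact hj (hstep.mp hcc).symm
      rw [heq, ih]
      simp [hj]

lemma ham_eq {d N : ℕ} {x : ZMod N → Fin d → Bool} {τ : ZMod N → Fin d}
    (hτ : IsTransitionSeq x τ) (i : ZMod N) (m : ℕ) :
    hammingDist (x (i + (m : ZMod N))) (x i)
      = (Finset.univ.filter fun c => Odd (cnt τ i m c)).card := by
  unfold hammingDist
  congr 1
  ext c
  simp only [Finset.mem_filter, Finset.mem_univ, true_and]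
  rw [← Nat.not_even_iff_odd, ← flip_iff hτ i m c]

section
variable {k d : ℕ} (hk4 : 4 ≤ k)
  {x : ZMod (4 * k + 6) → Fin d → Bool} (hx : IsCircuitCode d k (4 * k + 6) x)
  {τ : ZMod (4 * k + 6) → Fin d} (hτ : IsTransitionSeq x τ)

include hx hτ in
lemma spread_cnt (i : ZMod (4 * k + 6)) (m : ℕ) (h1 : 1 ≤ m) (h2 : m ≤ 2 * k + 3) :
    min m k ≤ (Finset.univ.filter fun c => Odd (cnt τ i m c)).card := by
  haveI : NeZero (4 * k + 6) := ⟨by omega⟩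
  rw [← ham_eq hτ i m]
  have hval : ((m : ZMod (4 * k + 6))).val = m := ZMod.val_cast_of_lt (by omega)
  have hneg : ((-(m : ZMod (4 * k + 6)))).val = 4 * k + 6 - m := by
    have hcast : (-(m : ZMod (4 * k + 6))) = ((4 * k + 6 - m : ℕ) : ZMod (4 * k + 6)) := by
      have hm : m ≤ 4 * k + 6 := by omega
      rw [Nat.cast_sub hm, ZMod.natCast_self]
      ring
    rw [hcast, ZMod.val_cast_of_lt (by omega)]
  have hcd : cycDist i (i + (m : ZMod (4 * k + 6))) = min (4 * k + 6 - m) m := by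
    unfold cycDist
    have e1 : i - (i + (m : ZMod (4 * k + 6))) = -(m : ZMod (4 * k + 6)) := by ring
    have e2 : (i + (m : ZMod (4 * k + 6))) - i = (m : ZMod (4 * k + 6)) := by ring
    rw [e1, e2, hneg, hval]
  have hsp := hx.spread i (i + (m : ZMod (4 * k + 6)))
  have hdle := dist_le_ham d (x i) (x (i + (m : ZMod (4 * k + 6))))
  rw [hammingDist_comm] at hdle
  have hmin : min m k ≤ min (cycDist i (i + (m : ZMod (4 * k + 6)))) k := by
    rw [hcd]
    omega
  exact hmin.trans (hsp.trans hdle)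

include hx hτ in
lemma main_count (i : ZMod (4 * k + 6)) (m : ℕ) (h1 : 1 ≤ m) (h2 : m ≤ 2 * k + 3)
    (F : Finset (Fin d)) (hF : ∀ c ∈ F, cnt τ i m c = 2) :
    min m k + 2 * F.card ≤ m := by
  classical
  set O := (Finset.univ.filter fun c => Odd (cnt τ i m c)) with hO
  have hdisj : Disjoint O F := by
    rw [Finset.disjoint_left]
    intro c hcO hcF
    rw [hO, Finset.mem_filter] at hcO
    rw [hF c hcF] at hcO
    exact (Nat.not_even_iff_odd.mpr hcO.2) (by decide)
  have hsum : ∑ c ∈ O ∪ F, cnt τ i m c ≤ ∑ c : Fin d, cnt τ i m c :=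
    Finset.sum_le_sum_of_subset (Finset.subset_univ _)
  have htot := sum_cnt τ i m
  have hsplit : ∑ c ∈ O ∪ F, cnt τ i m c = ∑ c ∈ O, cnt τ i m c + ∑ c ∈ F, cnt τ i m c :=
    Finset.sum_union hdisj
  have hOsum : O.card ≤ ∑ c ∈ O, cnt τ i m c := by
    rw [Finset.card_eq_sum_ones O]
    apply Finset.sum_le_sum
    intro c hc
    rw [hO, Finset.mem_filter] at hc
    rcases hc.2 with ⟨r, hr⟩
    omega
  have hFsum : ∑ c ∈ F, cnt τ i m c = 2 * F.card := by
    rw [Finset.sum_congr rfl hF, Finset.sum_const, smul_eq_mul, Nat.mul_comm]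
  have hOk : min m k ≤ O.card := spread_cnt hx hτ i m h1 h2
  omega

end

section
variable {k d : ℕ} (hk4 : 4 ≤ k) {τ : ZMod (4 * k + 6) → Fin d}
  (main_count : ∀ (i : ZMod (4 * k + 6)) (m : ℕ), 1 ≤ m → m ≤ 2 * k + 3 →
    ∀ (F : Finset (Fin d)), (∀ c ∈ F, cnt τ i m c = 2) → min m k + 2 * F.card ≤ m)
  (hsym : ∀ i : ZMod (4 * k + 6), τ (i + ((2 * k + 3 : ℕ) : ZMod (4 * k + 6))) = τ i)

include hk4 main_count in
lemma s1 : ∀ m : ℕ, 1 ≤ m → m ≤ k → ∀ i : ZMod (4 * k + 6),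
    τ i ≠ τ (i + ((m : ℕ) : ZMod (4 * k + 6))) := by
  intro m
  induction m using Nat.strong_induction_on with
  | _ m ih =>
    intro h1 h2 i heq
    set c := τ i with hc
    have hfilt : ((Finset.range (m + 1)).filter
        fun t : ℕ => τ (i + (Nat.cast t : ZMod (4 * k + 6))) = c) = {0, m} := by
      ext t
      simp only [Finset.mem_filter, Finset.mem_range, Finset.mem_insert, Finset.mem_singleton]
      constructor
      · rintro ⟨ht, hτt⟩
        by_contra hcon
        push_neg at hcon
        obtain ⟨ht0, htm⟩ := hcon
        exact ih t (by omega) (by omega) (by omega) i hτt.symm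
      · rintro (rfl | rfl)
        · constructor
          · omega
          · rw [Nat.cast_zero, add_zero]
        · exact ⟨by omega, heq.symm⟩
    have hcnt : cnt τ i (m + 1) c = 2 := by
      unfold cnt
      rw [hfilt]
      rw [Finset.card_insert_of_notMem (by simp; omega), Finset.card_singleton]
    have := main_count i (m + 1) (by omega) (by omega) {c} (by
      intro c' hc'
      rw [Finset.mem_singleton] at hc'
      rw [hc']
      exact hcnt)
    rw [Finset.card_singleton] at this
    omega

include hk4 main_count hsym in
lemma s2 (i : ZMod (4 * k + 6)) (t1 t2 t3 : ℕ) (h12 : t1 < t2) (h23 : t2 < t3)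
    (hspan : t3 - t1 ≤ 2 * k + 2)
    (e1 : τ (i + (Nat.cast t1 : ZMod (4 * k + 6))) = τ (i + (Nat.cast t2 : ZMod (4 * k + 6))))
    (e2 : τ (i + (Nat.cast t2 : ZMod (4 * k + 6))) = τ (i + (Nat.cast t3 : ZMod (4 * k + 6)))) :
    False := by
  have harith : ∀ (a b : ℕ), i + (Nat.cast (a + b) : ZMod (4 * k + 6))
      = (i + (Nat.cast a : ZMod (4 * k + 6))) + (Nat.cast b : ZMod (4 * k + 6)) := by
    intro a b; push_cast; ring
  have hgap : ∀ (a b : ℕ), a < b → τ (i + (Nat.cast a : ZMod (4 * k + 6)))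
      = τ (i + (Nat.cast b : ZMod (4 * k + 6))) → k + 1 ≤ b - a := by
    intro a b hab he
    by_contra hcon
    push_neg at hcon
    have := s1 hk4 main_count (b - a) (by omega) (by omega) (i + (Nat.cast a : ZMod (4 * k + 6)))
    rw [← harith a (b - a)] at this
    have hba : a + (b - a) = b := by omega
    rw [hba] at this
    exact this he
  have g1 := hgap t1 t2 h12 e1
  have g2 := hgap t2 t3 h23 e2
  have ht2 : t2 = t1 + (k + 1) := by omega
  have ht3 : t3 = t1 + (2 * k + 2) := by omega
  -- τ (i + t1) = τ (i + t1 + 2k+2) = τ (i + t1 - 1 + (2k+3)) = τ (i + t1 - 1)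
  have hs := hsym ((i + (Nat.cast t1 : ZMod (4 * k + 6))) - 1)
  have harr : ((i + (Nat.cast t1 : ZMod (4 * k + 6))) - 1) + ((2 * k + 3 : ℕ) : ZMod (4 * k + 6))
      = i + (Nat.cast (t1 + (2 * k + 2)) : ZMod (4 * k + 6)) := by
    push_cast; ring
  rw [harr] at hs
  rw [← ht3] at hs
  -- hs : τ (i + t3) = τ (i + t1 - 1)
  have hfin : τ ((i + (Nat.cast t1 : ZMod (4 * k + 6))) - 1)
      = τ (((i + (Nat.cast t1 : ZMod (4 * k + 6))) - 1) + ((1 : ℕ) : ZMod (4 * k + 6))) := by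
    rw [← hs, ← e2, ← e1]
    congr 1
    push_cast
    ring
  exact s1 hk4 main_count 1 le_rfl (by omega) _ hfin

include hk4 main_count hsym in
lemma cnt_eq_two (i : ZMod (4 * k + 6)) (m : ℕ) (hm : m ≤ 2 * k + 3) (t1 t2 : ℕ)
    (h12 : t1 < t2) (ht2 : t2 < m)
    (e : τ (i + (Nat.cast t1 : ZMod (4 * k + 6))) = τ (i + (Nat.cast t2 : ZMod (4 * k + 6)))) :
    cnt τ i m (τ (i + (Nat.cast t1 : ZMod (4 * k + 6)))) = 2 := by
  set c := τ (i + (Nat.cast t1 : ZMod (4 * k + 6))) with hc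
  have hfilt : ((Finset.range m).filter
      fun t : ℕ => τ (i + (Nat.cast t : ZMod (4 * k + 6))) = c) = {t1, t2} := by
    ext t
    simp only [Finset.mem_filter, Finset.mem_range, Finset.mem_insert, Finset.mem_singleton]
    constructor
    · rintro ⟨ht, hτt⟩
      by_contra hcon
      push_neg at hcon
      obtain ⟨h1, h2⟩ := hcon
      rcases lt_trichotomy t t1 with hlt | heqq | hgt
      · exact s2 hk4 main_count hsym i t t1 t2 hlt h12 (by omega) (hτt.trans hc) e
      · exact h1 heqq
      · rcases lt_trichotomy t t2 with hlt' | heqq' | hgt'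
        · exact s2 hk4 main_count hsym i t1 t t2 hgt hlt' (by omega) hτt.symm (hτt.trans e)
        · exact h2 heqq'
        · exact s2 hk4 main_count hsym i t1 t2 t h12 hgt' (by omega) e (e.symm.trans hτt.symm)
    · rintro (rfl | rfl)
      · exact ⟨by omega, rfl⟩
      · exact ⟨ht2, e.symm⟩
  unfold cnt
  rw [hfilt]
  rw [Finset.card_insert_of_notMem (by simp; omega), Finset.card_singleton]

end

section
variable {k d : ℕ} (hk4 : 4 ≤ k) {τ : ZMod (4 * k + 6) → Fin d}
  (hsym : ∀ i : ZMod (4 * k + 6), τ (i + ((2 * k + 3 : ℕ) : ZMod (4 * k + 6))) = τ i)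
  (s1h : ∀ m : ℕ, 1 ≤ m → m ≤ k → ∀ i : ZMod (4 * k + 6),
    τ i ≠ τ (i + ((m : ℕ) : ZMod (4 * k + 6))))
  (s2h : ∀ (i : ZMod (4 * k + 6)) (t1 t2 t3 : ℕ), t1 < t2 → t2 < t3 → t3 - t1 ≤ 2 * k + 2 →
    τ (i + (Nat.cast t1 : ZMod (4 * k + 6))) = τ (i + (Nat.cast t2 : ZMod (4 * k + 6))) →
    τ (i + (Nat.cast t2 : ZMod (4 * k + 6))) = τ (i + (Nat.cast t3 : ZMod (4 * k + 6))) →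
    False)
  (cnt2h : ∀ (i : ZMod (4 * k + 6)) (m : ℕ), m ≤ 2 * k + 3 → ∀ (t1 t2 : ℕ), t1 < t2 → t2 < m →
    τ (i + (Nat.cast t1 : ZMod (4 * k + 6))) = τ (i + (Nat.cast t2 : ZMod (4 * k + 6))) →
    cnt τ i m (τ (i + (Nat.cast t1 : ZMod (4 * k + 6)))) = 2)
  (mch : ∀ (i : ZMod (4 * k + 6)) (m : ℕ), 1 ≤ m → m ≤ 2 * k + 3 →
    ∀ (F : Finset (Fin d)), (∀ c ∈ F, cnt τ i m c = 2) → min m k + 2 * F.card ≤ m)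

lemma addc (i : ZMod (4 * k + 6)) (a b : ℕ) :
    (i + (Nat.cast a : ZMod (4 * k + 6))) + (Nat.cast b : ZMod (4 * k + 6))
      = i + (Nat.cast (a + b) : ZMod (4 * k + 6)) := by
  push_cast; ring

include hk4 s1h in
lemma neigh (s : ZMod (4 * k + 6)) (a g : ℕ) (h1 : 1 ≤ g) (h2 : g ≤ k) :
    τ (s + (Nat.cast a : ZMod (4 * k + 6))) ≠ τ (s + (Nat.cast (a + g) : ZMod (4 * k + 6))) := by
  have := s1h g h1 h2 (s + (Nat.cast a : ZMod (4 * k + 6)))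
  rwa [addc] at this

include hk4 s1h in
lemma three_a (hno : ∀ s : ZMod (4 * k + 6), ¬ IsBitRun τ s (k + 3))
    (s : ZMod (4 * k + 6)) :
    τ (s + (Nat.cast 0 : ZMod (4 * k + 6))) = τ (s + (Nat.cast (k+1) : ZMod (4 * k + 6))) ∨
    τ (s + (Nat.cast 1 : ZMod (4 * k + 6))) = τ (s + (Nat.cast (k+2) : ZMod (4 * k + 6))) ∨
    τ (s + (Nat.cast 0 : ZMod (4 * k + 6))) = τ (s + (Nat.cast (k+2) : ZMod (4 * k + 6))) := by
  have h := hno s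
  unfold IsBitRun at h
  push_neg at h
  obtain ⟨a, b, hab, hne⟩ := h
  obtain ⟨a', b', hlt, hb2, he⟩ : ∃ a' b' : ℕ, a' < b' ∧ b' ≤ k + 2 ∧
      τ (s + (Nat.cast a' : ZMod (4 * k + 6))) = τ (s + (Nat.cast b' : ZMod (4 * k + 6))) := by
    rcases lt_or_gt_of_ne (fun e => hne (Fin.ext e) : (a:ℕ) ≠ (b:ℕ)) with h' | h'
    · exact ⟨a, b, h', by omega, hab⟩
    · exact ⟨b, a, h', by omega, hab.symm⟩
  have hgap : k + 1 ≤ b' - a' := by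
    by_contra hcon
    push_neg at hcon
    exact neigh hk4 s1h s a' (b' - a') (by omega) (by omega)
      (by rwa [(by omega : a' + (b' - a') = b')])
  rcases (by omega : (a' = 0 ∧ b' = k + 1) ∨ (a' = 1 ∧ b' = k + 2) ∨ (a' = 0 ∧ b' = k + 2))
    with ⟨rfl, rfl⟩ | ⟨rfl, rfl⟩ | ⟨rfl, rfl⟩
  · exact Or.inl he
  · exact Or.inr (Or.inl he)
  · exact Or.inr (Or.inr he)

include hk4 cnt2h mch in
lemma window3 (i : ZMod (4 * k + 6)) (a1 b1 a2 b2 a3 b3 : ℕ)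
    (o1 : a1 < b1) (o2 : a2 < b2) (o3 : a3 < b3)
    (u1 : b1 ≤ k + 4) (u2 : b2 ≤ k + 4) (u3 : b3 ≤ k + 4)
    (e1 : τ (i + (Nat.cast a1 : ZMod (4 * k + 6))) = τ (i + (Nat.cast b1 : ZMod (4 * k + 6))))
    (e2 : τ (i + (Nat.cast a2 : ZMod (4 * k + 6))) = τ (i + (Nat.cast b2 : ZMod (4 * k + 6))))
    (e3 : τ (i + (Nat.cast a3 : ZMod (4 * k + 6))) = τ (i + (Nat.cast b3 : ZMod (4 * k + 6))))
    (ne12 : τ (i + (Nat.cast a1 : ZMod (4 * k + 6))) ≠ τ (i + (Nat.cast a2 : ZMod (4 * k + 6))))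
    (ne13 : τ (i + (Nat.cast a1 : ZMod (4 * k + 6))) ≠ τ (i + (Nat.cast a3 : ZMod (4 * k + 6))))
    (ne23 : τ (i + (Nat.cast a2 : ZMod (4 * k + 6))) ≠ τ (i + (Nat.cast a3 : ZMod (4 * k + 6)))) :
    False := by
  classical
  set c1 := τ (i + (Nat.cast a1 : ZMod (4 * k + 6)))
  set c2 := τ (i + (Nat.cast a2 : ZMod (4 * k + 6)))
  set c3 := τ (i + (Nat.cast a3 : ZMod (4 * k + 6)))
  have hm : k + 5 ≤ 2 * k + 3 := by omega
  have hc1 : cnt τ i (k + 5) c1 = 2 := cnt2h i (k + 5) hm a1 b1 o1 (by omega) e1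
  have hc2 : cnt τ i (k + 5) c2 = 2 := cnt2h i (k + 5) hm a2 b2 o2 (by omega) e2
  have hc3 : cnt τ i (k + 5) c3 = 2 := cnt2h i (k + 5) hm a3 b3 o3 (by omega) e3
  have hcard : ({c1, c2, c3} : Finset (Fin d)).card = 3 := by
    rw [Finset.card_insert_of_notMem (by simp [ne12, ne13]),
      Finset.card_insert_of_notMem (by simp [ne23]), Finset.card_singleton]
  have := mch i (k + 5) (by omega) hm {c1, c2, c3} (by
    intro c hc
    simp only [Finset.mem_insert, Finset.mem_singleton] at hc
    rcases hc with rfl | rfl | rfl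
    · exact hc1
    · exact hc2
    · exact hc3)
  rw [hcard] at this
  omega

include hk4 s1h cnt2h mch in
lemma pairAA (hno : ∀ s : ZMod (4 * k + 6), ¬ IsBitRun τ s (k + 3))
    (s : ZMod (4 * k + 6)) :
    τ (s + (Nat.cast 1 : ZMod (4 * k + 6))) = τ (s + (Nat.cast (k+2) : ZMod (4 * k + 6))) ∨
    τ (s + (Nat.cast 2 : ZMod (4 * k + 6))) = τ (s + (Nat.cast (k+3) : ZMod (4 * k + 6))) := by
  by_contra hcon
  push_neg at hcon
  obtain ⟨hA1, hA2⟩ := hcon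
  have h0 := three_a hk4 s1h hno s
  have h1 := three_a hk4 s1h hno (s + (Nat.cast 1 : ZMod (4 * k + 6)))
  have h2 := three_a hk4 s1h hno (s + (Nat.cast 2 : ZMod (4 * k + 6)))
  simp only [addc] at h1 h2
  simp only [(by omega : 1 + 0 = 1), (by omega : 1 + (k+1) = k+2), (by omega : 1 + (k+2) = k+3),
    (by omega : 1 + 1 = 2)] at h1
  simp only [(by omega : 2 + 0 = 2), (by omega : 2 + (k+1) = k+3), (by omega : 2 + (k+2) = k+4),
    (by omega : 2 + 1 = 3)] at h2
  -- h1 : T1 = T(k+2) ∨ T2 = T(k+3) ∨ T1 = T(k+3)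
  replace h1 : τ (s + (Nat.cast 1 : ZMod (4 * k + 6)))
      = τ (s + (Nat.cast (k+3) : ZMod (4 * k + 6))) := by
    rcases h1 with h | h | h
    · exact absurd h hA1
    · exact absurd h hA2
    · exact h
  -- h0 : T0 = T(k+1) ∨ T1 = T(k+2) ∨ T0 = T(k+2) → first or third
  replace h0 : τ (s + (Nat.cast 0 : ZMod (4 * k + 6)))
        = τ (s + (Nat.cast (k+1) : ZMod (4 * k + 6))) ∨
      τ (s + (Nat.cast 0 : ZMod (4 * k + 6)))
        = τ (s + (Nat.cast (k+2) : ZMod (4 * k + 6))) := by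
    rcases h0 with h | h | h
    · exact Or.inl h
    · exact absurd h hA1
    · exact Or.inr h
  -- h2 : T2 = T(k+3) ∨ T3 = T(k+4) ∨ T2 = T(k+4) → second or third
  replace h2 : τ (s + (Nat.cast 3 : ZMod (4 * k + 6)))
        = τ (s + (Nat.cast (k+4) : ZMod (4 * k + 6))) ∨
      τ (s + (Nat.cast 2 : ZMod (4 * k + 6)))
        = τ (s + (Nat.cast (k+4) : ZMod (4 * k + 6))) := by
    rcases h2 with h | h | h
    · exact absurd h hA2
    · exact Or.inl h
    · exact Or.inr h
  have n01 : τ (s + (Nat.cast 0 : ZMod (4 * k + 6))) ≠ τ (s + (Nat.cast 1 : ZMod (4 * k + 6))) :=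
    neigh hk4 s1h s 0 1 (by omega) (by omega)
  have n02 : τ (s + (Nat.cast 0 : ZMod (4 * k + 6))) ≠ τ (s + (Nat.cast 2 : ZMod (4 * k + 6))) :=
    neigh hk4 s1h s 0 2 (by omega) (by omega)
  have n03 : τ (s + (Nat.cast 0 : ZMod (4 * k + 6))) ≠ τ (s + (Nat.cast 3 : ZMod (4 * k + 6))) :=
    neigh hk4 s1h s 0 3 (by omega) (by omega)
  have n12 : τ (s + (Nat.cast 1 : ZMod (4 * k + 6))) ≠ τ (s + (Nat.cast 2 : ZMod (4 * k + 6))) :=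
    neigh hk4 s1h s 1 1 (by omega) (by omega)
  have n13 : τ (s + (Nat.cast 1 : ZMod (4 * k + 6))) ≠ τ (s + (Nat.cast 3 : ZMod (4 * k + 6))) := by
    have := neigh hk4 s1h s 1 2 (by omega) (by omega)
    rwa [(by omega : 1 + 2 = 3)] at this
  rcases h0 with hP1 | hP1 <;> rcases h2 with hP3 | hP3
  · exact window3 hk4 cnt2h mch s 0 (k+1) 1 (k+3) 3 (k+4) (by omega) (by omega) (by omega)
      (by omega) (by omega) (by omega) hP1 h1 hP3 n01 n03 n13
  · exact window3 hk4 cnt2h mch s 0 (k+1) 1 (k+3) 2 (k+4) (by omega) (by omega) (by omega)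
      (by omega) (by omega) (by omega) hP1 h1 hP3 n01 n02 n12
  · exact window3 hk4 cnt2h mch s 0 (k+2) 1 (k+3) 3 (k+4) (by omega) (by omega) (by omega)
      (by omega) (by omega) (by omega) hP1 h1 hP3 n01 n03 n13
  · exact window3 hk4 cnt2h mch s 0 (k+2) 1 (k+3) 2 (k+4) (by omega) (by omega) (by omega)
      (by omega) (by omega) (by omega) hP1 h1 hP3 n01 n02 n12

include hk4 hsym s1h s2h cnt2h mch in
lemma final (hno : ∀ s : ZMod (4 * k + 6), ¬ IsBitRun τ s (k + 3)) : False := by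
  -- ∀ s, A s ∨ A (s+1) in offset form
  have hAA : ∀ s : ZMod (4 * k + 6),
      τ (s + (Nat.cast 0 : ZMod (4 * k + 6))) = τ (s + (Nat.cast (k+1) : ZMod (4 * k + 6))) ∨
      τ (s + (Nat.cast 1 : ZMod (4 * k + 6))) = τ (s + (Nat.cast (k+2) : ZMod (4 * k + 6))) := by
    intro s
    have h := pairAA hk4 s1h cnt2h mch hno (s - (Nat.cast 1 : ZMod (4 * k + 6)))
    rw [show (s - (Nat.cast 1 : ZMod (4 * k + 6))) + (Nat.cast 1 : ZMod (4 * k + 6))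
        = s + (Nat.cast 0 : ZMod (4 * k + 6)) from by push_cast; ring,
      show (s - (Nat.cast 1 : ZMod (4 * k + 6))) + (Nat.cast (k+2) : ZMod (4 * k + 6))
        = s + (Nat.cast (k+1) : ZMod (4 * k + 6)) from by push_cast; ring,
      show (s - (Nat.cast 1 : ZMod (4 * k + 6))) + (Nat.cast 2 : ZMod (4 * k + 6))
        = s + (Nat.cast 1 : ZMod (4 * k + 6)) from by push_cast; ring,
      show (s - (Nat.cast 1 : ZMod (4 * k + 6))) + (Nat.cast (k+3) : ZMod (4 * k + 6))
        = s + (Nat.cast (k+2) : ZMod (4 * k + 6)) from by push_cast; ring] at h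
    exact h
  -- no B pairs
  have hnoB : ∀ s : ZMod (4 * k + 6),
      τ (s + (Nat.cast 0 : ZMod (4 * k + 6))) ≠ τ (s + (Nat.cast (k+2) : ZMod (4 * k + 6))) := by
    intro s hB
    rcases hAA s with hA | hA
    · -- triple 0, k+1, k+2
      exact s2h s 0 (k+1) (k+2) (by omega) (by omega) (by omega) hA (hA.symm.trans hB)
    · -- τ s = τ (s+1)
      exact neigh hk4 s1h s 0 1 (by omega) (by omega) (hB.trans hA.symm)
  -- B s ↔ A (s + (k+2)); hence no A pairs at all
  have hnoA : ∀ t : ZMod (4 * k + 6),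
      τ (t + (Nat.cast 0 : ZMod (4 * k + 6))) ≠ τ (t + (Nat.cast (k+1) : ZMod (4 * k + 6))) := by
    intro t hA
    set s := t - (Nat.cast (k+2) : ZMod (4 * k + 6)) with hs
    apply hnoB s
    have e0 : s + (Nat.cast 0 : ZMod (4 * k + 6)) = s := by push_cast; ring
    have e1 : s + (Nat.cast (k+2) : ZMod (4 * k + 6)) = t := by rw [hs]; ring
    have e2 : t + (Nat.cast 0 : ZMod (4 * k + 6)) = t := by push_cast; ring
    have e3 : t + (Nat.cast (k+1) : ZMod (4 * k + 6)) = s + (Nat.cast (2*k+3) : ZMod (4 * k + 6)) := by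
      rw [hs]; push_cast; ring
    rw [e0, e1]
    rw [e2, e3] at hA
    -- hA : τ t = τ (s + (2k+3)); hsym : τ (s + (2k+3)) = τ s
    exact (hA.trans (hsym s)).symm
  rcases hAA 0 with h | h
  · exact hnoA 0 h
  · have := hnoA ((0 : ZMod (4 * k + 6)) + (Nat.cast 1 : ZMod (4 * k + 6)))
    rw [addc, addc, (by omega : 1 + 0 = 1), (by omega : 1 + (k+1) = k+2)] at this
    exact this h

end

end CircuitCodeAux

/-- For even `k ≥ 4` and `d = (3k+4)/2`, the transition sequence of any symmetric
`(d,k)` circuit code of length `4k+6` contains a bit run of length `k+3`. -/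
theorem stmt_11 (k d : ℕ) (hk : Even k) (hk4 : 4 ≤ k) (hd : 2 * d = 3 * k + 4)
    (x : ZMod (4 * k + 6) → Fin d → Bool)
    (hx : IsCircuitCode d k (4 * k + 6) x)
    (τ : ZMod (4 * k + 6) → Fin d) (hτ : IsTransitionSeq x τ)
    (hsym : ∀ i : ZMod (4 * k + 6), τ (i + ((2 * k + 3 : ℕ) : ZMod (4 * k + 6))) = τ i) :
    ∃ s : ZMod (4 * k + 6), IsBitRun τ s (k + 3) := by
  classical
  by_contra hcon
  push_neg at hcon
  have mch : ∀ (i : ZMod (4 * k + 6)) (m : ℕ), 1 ≤ m → m ≤ 2 * k + 3 →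
      ∀ (F : Finset (Fin d)), (∀ c ∈ F, CircuitCodeAux.cnt τ i m c = 2) →
        min m k + 2 * F.card ≤ m := fun i m h1 h2 F hF =>
    CircuitCodeAux.main_count hx hτ i m h1 h2 F (fun c hc => hF c hc)
  have s1h := CircuitCodeAux.s1 hk4 mch
  have s2h := CircuitCodeAux.s2 hk4 mch hsym
  have cnt2h := CircuitCodeAux.cnt_eq_two hk4 mch hsym
  exact CircuitCodeAux.final hk4 hsym s1h s2h cnt2h mch hcon
end

section
/- Let k be an even integer with k ≥ 4, let d = (3k+4)/2, and let C be a symmetric (d,k) circuit code of length 4k+6 whose transition sequence has the form T(C) = (ω₁, x, ω₂, ω₁, x, ω₂), where ω₁ = (1,2,...,k+2) and ω₂ = (β₁,...,β_k). If x ∈ {1,2} and β₁ = 3, then the segment (β₂,...,β_k, 1, 2, 3, 4) of T(C) is a bit run of length k+3. -/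
lemma two_le_filter_card {α : Type*} [Fintype α] {p : α → Prop} [DecidablePred p]
    {t₁ t₂ : α} (hne : t₁ ≠ t₂) (h₁ : p t₁) (h₂ : p t₂) :
    2 ≤ (Finset.univ.filter p).card :=
  Finset.one_lt_card.mpr ⟨t₁, by simp [h₁], t₂, by simp [h₂], hne⟩

lemma delta_bound {d N : ℕ} (τ : ZMod N → Fin d) (s : ZMod N) (m : ℕ) (P : Finset (Fin d))
    (hP : ∀ c ∈ P, 2 ≤ (Finset.univ.filter fun t : Fin m => τ (s + ((t : ℕ) : ZMod N)) = c).card) :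
    segDelta τ s m + 2 * P.card ≤ m := by
  classical
  have hm : ∑ c : Fin d,
      (Finset.univ.filter fun t : Fin m => τ (s + ((t : ℕ) : ZMod N)) = c).card = m := by
    have h := Finset.card_eq_sum_card_fiberwise
      (f := fun t : Fin m => τ (s + ((t : ℕ) : ZMod N)))
      (s := (Finset.univ : Finset (Fin m))) (t := (Finset.univ : Finset (Fin d)))
      (fun x _ => Finset.mem_univ _)
    rw [Finset.card_univ, Fintype.card_fin] at h
    exact h.symm
  have key : ∀ c : Fin d,
      (if Odd ((Finset.univ.filter fun t : Fin m => τ (s + ((t : ℕ) : ZMod N)) = c).card)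
        then 1 else 0) + (if c ∈ P then 2 else 0)
      ≤ (Finset.univ.filter fun t : Fin m => τ (s + ((t : ℕ) : ZMod N)) = c).card := by
    intro c
    rcases Nat.even_or_odd
        ((Finset.univ.filter fun t : Fin m => τ (s + ((t : ℕ) : ZMod N)) = c).card) with he | ho
    · have hno := Nat.not_odd_iff_even.mpr he
      rw [if_neg hno, Nat.zero_add]
      by_cases h2 : c ∈ P
      · rw [if_pos h2]; exact hP c h2
      · rw [if_neg h2]; exact Nat.zero_le _
    · rw [if_pos ho]
      obtain ⟨r, hr⟩ := ho
      by_cases h2 : c ∈ P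
      · rw [if_pos h2]
        have h3 := hP c h2
        omega
      · rw [if_neg h2]
        omega
  have hsum : ∑ c : Fin d,
      ((if Odd ((Finset.univ.filter fun t : Fin m => τ (s + ((t : ℕ) : ZMod N)) = c).card)
        then 1 else 0) + (if c ∈ P then 2 else 0)) ≤ m := by
    calc ∑ c : Fin d,
        ((if Odd ((Finset.univ.filter fun t : Fin m => τ (s + ((t : ℕ) : ZMod N)) = c).card)
          then 1 else 0) + (if c ∈ P then 2 else 0))
        ≤ ∑ c : Fin d,
          (Finset.univ.filter fun t : Fin m => τ (s + ((t : ℕ) : ZMod N)) = c).card :=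
          Finset.sum_le_sum fun c _ => key c
      _ = m := hm
  have h1 : ∑ c : Fin d,
      (if Odd ((Finset.univ.filter fun t : Fin m => τ (s + ((t : ℕ) : ZMod N)) = c).card)
        then 1 else 0) = segDelta τ s m := by
    rw [segDelta, Finset.card_filter]
  have h2 : ∑ c : Fin d, (if c ∈ P then 2 else 0) = 2 * P.card := by
    rw [Finset.sum_ite_mem, Finset.univ_inter, Finset.sum_const, smul_eq_mul, mul_comm]
  rw [Finset.sum_add_distrib, h1, h2] at hsum
  exact hsum

lemma flip_parity {d N : ℕ} (x : ZMod N → Fin d → Bool) (τ : ZMod N → Fin d)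
    (hτ : IsTransitionSeq x τ) (m : ℕ) :
    ∀ (i : ZMod N) (c : Fin d),
      (x (i + ((m : ℕ) : ZMod N)) c ≠ x i c ↔
        Odd ((Finset.univ.filter fun t : Fin m => τ (i + ((t : ℕ) : ZMod N)) = c).card)) := by
  induction m with
  | zero => intro i c; simp
  | succ m ih =>
    intro i c
    have hcard : ((Finset.univ.filter fun t : Fin (m+1) => τ (i + ((t : ℕ) : ZMod N)) = c).card)
        = ((Finset.univ.filter fun t : Fin m => τ (i + ((t : ℕ) : ZMod N)) = c).card)
          + (if τ (i + ((m : ℕ) : ZMod N)) = c then 1 else 0) := by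
      rw [Finset.card_filter, Finset.card_filter, Fin.sum_univ_castSucc]
      simp
    have hrw : i + (((m+1 : ℕ)) : ZMod N) = (i + ((m : ℕ) : ZMod N)) + 1 := by
      push_cast; ring
    rw [hrw, hcard]
    have hstep := hτ (i + ((m : ℕ) : ZMod N)) c
    have hih := ih i c
    by_cases hc : τ (i + ((m : ℕ) : ZMod N)) = c
    · have hne : x ((i + ((m : ℕ) : ZMod N)) + 1) c ≠ x (i + ((m : ℕ) : ZMod N)) c :=
        hstep.mpr hc.symm
      rw [if_pos hc, Nat.odd_add_one]
      rw [← hih]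
      cases hb1 : x ((i + ((m : ℕ) : ZMod N)) + 1) c <;>
        cases hb2 : x (i + ((m : ℕ) : ZMod N)) c <;>
        cases hb3 : x i c <;> simp_all
    · have heq : x ((i + ((m : ℕ) : ZMod N)) + 1) c = x (i + ((m : ℕ) : ZMod N)) c := by
        by_contra hne
        exact hc (hstep.mp hne).symm
      rw [if_neg hc, Nat.add_zero, heq]
      exact hih

lemma hamming_eq_segDelta {d N : ℕ} (x : ZMod N → Fin d → Bool) (τ : ZMod N → Fin d)
    (hτ : IsTransitionSeq x τ) (i : ZMod N) (m : ℕ) :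
    hammingDist (x i) (x (i + ((m : ℕ) : ZMod N))) = segDelta τ i m := by
  rw [segDelta]
  have hset : (Finset.univ.filter fun c : Fin d => x i c ≠ x (i + ((m : ℕ) : ZMod N)) c)
      = (Finset.univ.filter fun c : Fin d =>
          Odd ((Finset.univ.filter fun t : Fin m => τ (i + ((t : ℕ) : ZMod N)) = c).card)) := by
    ext c
    simp only [Finset.mem_filter, Finset.mem_univ, true_and]
    rw [ne_comm]
    exact flip_parity x τ hτ m i c
  show (Finset.univ.filter fun c : Fin d => x i c ≠ x (i + ((m : ℕ) : ZMod N)) c).card = _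
  rw [hset]

lemma hypercube_dist_le_hammingDist {d : ℕ} (u v : Fin d → Bool) :
    (hypercube d).dist u v ≤ hammingDist u v := by
  suffices h : ∀ (n : ℕ) (u v : Fin d → Bool), hammingDist u v = n →
      ∃ p : (hypercube d).Walk u v, p.length = n by
    obtain ⟨p, hp⟩ := h _ u v rfl
    exact hp ▸ SimpleGraph.dist_le p
  intro n
  induction n with
  | zero =>
    intro u v h
    obtain rfl : u = v := hammingDist_eq_zero.mp h
    exact ⟨SimpleGraph.Walk.nil, rfl⟩
  | succ n ih =>
    intro u v h
    have hne : u ≠ v := by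
      intro h'
      rw [h', hammingDist_self] at h
      omega
    obtain ⟨c, hc⟩ : ∃ c, u c ≠ v c := by
      by_contra hall
      push_neg at hall
      exact hne (funext hall)
    set w := Function.update u c (v c) with hw
    have hadj : (hypercube d).Adj u w := by
      show hammingDist u w = 1
      have hone : (Finset.univ.filter fun i => u i ≠ w i) = {c} := by
        ext i
        simp only [Finset.mem_filter, Finset.mem_univ, true_and, Finset.mem_singleton, hw]
        constructor
        · intro hi
          by_contra hic
          rw [Function.update_of_ne hic] at hi
          exact hi rfl
        · intro hi
          subst hi
          rw [Function.update_self]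
          exact hc
      show (Finset.univ.filter fun i => u i ≠ w i).card = 1
      rw [hone, Finset.card_singleton]
    have hwv : hammingDist w v = n := by
      have hset : (Finset.univ.filter fun i => w i ≠ v i)
          = (Finset.univ.filter fun i => u i ≠ v i).erase c := by
        ext i
        simp only [Finset.mem_filter, Finset.mem_univ, true_and, Finset.mem_erase, hw]
        by_cases hic : i = c
        · subst hic
          simp [Function.update_self]
        · rw [Function.update_of_ne hic]
          tauto
      have hcmem : c ∈ Finset.univ.filter fun i => u i ≠ v i := by simp [hc]
      have hcv : (Finset.univ.filter fun i => u i ≠ v i).card = n + 1 := h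
      show (Finset.univ.filter fun i => w i ≠ v i).card = n
      rw [hset, Finset.card_erase_of_mem hcmem, hcv]
      omega
    obtain ⟨p, hp⟩ := ih w v hwv
    exact ⟨SimpleGraph.Walk.cons hadj p, by simp [hp]⟩

/-- For even `k ≥ 4`, `d = (3k+4)/2`, and a symmetric `(d,k)` circuit code of length
`4k+6` whose transition sequence has the form `(ω₁, x, ω₂, ω₁, x, ω₂)` with
`ω₁ = (1,...,k+2)` (coordinates modeled 0-based as `Fin d`): if `x ∈ {1,2}` (0-based
value `0` or `1`) and `β₁ = 3` (0-based value `2`, at position `k+3`), then the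
segment `(β₂,...,β_k,1,2,3,4)` (starting at position `k+4`, of length `k+3`)
is a bit run. -/
theorem stmt_15 (k d : ℕ) (hk : Even k) (hk4 : 4 ≤ k) (hd : 2 * d = 3 * k + 4)
    (x : ZMod (4 * k + 6) → Fin d → Bool)
    (hx : IsCircuitCode d k (4 * k + 6) x)
    (τ : ZMod (4 * k + 6) → Fin d) (hτ : IsTransitionSeq x τ)
    (hsym : ∀ i : ZMod (4 * k + 6), τ (i + ((2 * k + 3 : ℕ) : ZMod (4 * k + 6))) = τ i)
    (hω₁ : ∀ i : ℕ, i ≤ k + 1 → (τ ((i : ℕ) : ZMod (4 * k + 6))).val = i)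
    (hx12 : (τ ((k + 2 : ℕ) : ZMod (4 * k + 6))).val = 0 ∨
            (τ ((k + 2 : ℕ) : ZMod (4 * k + 6))).val = 1)
    (hβ₁ : (τ ((k + 3 : ℕ) : ZMod (4 * k + 6))).val = 2) :
    IsBitRun τ ((k + 4 : ℕ) : ZMod (4 * k + 6)) (k + 3) := by
  haveI : NeZero (4 * k + 6) := ⟨by omega⟩
  -- spread lower bound in terms of segDelta
  have lower : ∀ (i : ZMod (4 * k + 6)) (m : ℕ), 0 < m → m ≤ 2 * k + 3 →
      min m k ≤ segDelta τ i m := by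
    intro i m hm1 hm2
    have hsp := hx.spread i (i + ((m : ℕ) : ZMod (4 * k + 6)))
    have hv : ((m : ℕ) : ZMod (4 * k + 6)).val = m := ZMod.val_cast_of_lt (by omega)
    have hcyc : cycDist i (i + ((m : ℕ) : ZMod (4 * k + 6))) = m := by
      rw [cycDist]
      have e1 : i - (i + ((m : ℕ) : ZMod (4 * k + 6))) = -((m : ℕ) : ZMod (4 * k + 6)) := by
        ring
      have e2 : i + ((m : ℕ) : ZMod (4 * k + 6)) - i = ((m : ℕ) : ZMod (4 * k + 6)) := by
        ring
      rw [e1, e2, ZMod.neg_val]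
      have hnz : ((m : ℕ) : ZMod (4 * k + 6)) ≠ 0 := by
        intro h0
        rw [h0, ZMod.val_zero] at hv
        omega
      rw [if_neg hnz, hv]
      omega
    have hdle := hypercube_dist_le_hammingDist (x i) (x (i + ((m : ℕ) : ZMod (4 * k + 6))))
    rw [hamming_eq_segDelta x τ hτ] at hdle
    rw [hcyc] at hsp
    omega
  -- Engine 1: equal transitions at distance L with 1 ≤ L ≤ k are impossible
  have eng1 : ∀ (i : ZMod (4 * k + 6)) (L : ℕ), 1 ≤ L → L ≤ k →
      τ i = τ (i + ((L : ℕ) : ZMod (4 * k + 6))) → False := by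
    intro i L hL1 hLk heq
    have hpair : 2 ≤ (Finset.univ.filter fun t : Fin (L + 1) =>
        τ (i + ((t : ℕ) : ZMod (4 * k + 6))) = τ i).card := by
      refine two_le_filter_card (t₁ := (⟨0, by omega⟩ : Fin (L + 1)))
        (t₂ := (⟨L, by omega⟩ : Fin (L + 1))) ?_ ?_ ?_
      · intro h
        rw [Fin.mk.injEq] at h
        omega
      · show τ (i + (((0 : ℕ) : ZMod (4 * k + 6)))) = τ i
        norm_num
      · show τ (i + (((L : ℕ) : ZMod (4 * k + 6)))) = τ i
        exact heq.symm
    have hb := delta_bound τ i (L + 1) {τ i} (by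
      intro c hc
      rw [Finset.mem_singleton] at hc
      subst hc
      exact hpair)
    have hl := lower i (L + 1) (by omega) (by omega)
    rw [Finset.card_singleton] at hb
    omega
  -- symmetry in ℕ-cast form
  have hsym' : ∀ i : ℕ, τ (((i + (2 * k + 3) : ℕ)) : ZMod (4 * k + 6)) = τ ((i : ℕ) : ZMod (4 * k + 6)) := by
    intro i
    have h := hsym ((i : ℕ) : ZMod (4 * k + 6))
    rw [← Nat.cast_add] at h
    exact h
  have finval : ∀ a b : Fin d, a.val = b.val → a = b := fun a b h => Fin.val_injective h
  -- Engine 2: τ at position k+2+e (e ∈ {2,3}) cannot have value 3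
  have eng2 : ∀ e : ℕ, 2 ≤ e → e ≤ 3 →
      (τ ((k + 2 + e : ℕ) : ZMod (4 * k + 6))).val = 3 → False := by
    intro e he2 he3 hval
    have harg : ∀ t : ℕ, ((k + 2 : ℕ) : ZMod (4 * k + 6)) + ((t : ℕ) : ZMod (4 * k + 6))
        = ((k + 2 + t : ℕ) : ZMod (4 * k + 6)) := by
      intro t
      rw [← Nat.cast_add]
    set cx := τ ((k + 2 : ℕ) : ZMod (4 * k + 6)) with hcx
    set c2 := τ ((k + 3 : ℕ) : ZMod (4 * k + 6)) with hc2
    set c3 := τ ((k + 2 + e : ℕ) : ZMod (4 * k + 6)) with hc3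
    -- pair for cx
    have hpx : 2 ≤ (Finset.univ.filter fun t : Fin (k + 5) =>
        τ (((k + 2 : ℕ) : ZMod (4 * k + 6)) + ((t : ℕ) : ZMod (4 * k + 6))) = cx).card := by
      rcases hx12 with hx0 | hx1
      · refine two_le_filter_card (t₁ := (⟨0, by omega⟩ : Fin (k + 5)))
          (t₂ := (⟨k + 1, by omega⟩ : Fin (k + 5))) ?_ ?_ ?_
        · intro h
          rw [Fin.mk.injEq] at h
          omega
        · show τ (((k + 2 : ℕ) : ZMod (4 * k + 6)) + (((0 : ℕ)) : ZMod (4 * k + 6))) = cx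
          rw [harg 0]
        · show τ (((k + 2 : ℕ) : ZMod (4 * k + 6)) + (((k + 1 : ℕ)) : ZMod (4 * k + 6))) = cx
          rw [harg (k + 1)]
          have e1 : (k + 2 + (k + 1) : ℕ) = 0 + (2 * k + 3) := by omega
          rw [e1, hsym' 0]
          apply finval
          rw [hω₁ 0 (by omega)]
          exact hx0.symm
      · refine two_le_filter_card (t₁ := (⟨0, by omega⟩ : Fin (k + 5)))
          (t₂ := (⟨k + 2, by omega⟩ : Fin (k + 5))) ?_ ?_ ?_
        · intro h
          rw [Fin.mk.injEq] at h
          omega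
        · show τ (((k + 2 : ℕ) : ZMod (4 * k + 6)) + (((0 : ℕ)) : ZMod (4 * k + 6))) = cx
          rw [harg 0]
        · show τ (((k + 2 : ℕ) : ZMod (4 * k + 6)) + (((k + 2 : ℕ)) : ZMod (4 * k + 6))) = cx
          rw [harg (k + 2)]
          have e1 : (k + 2 + (k + 2) : ℕ) = 1 + (2 * k + 3) := by omega
          rw [e1, hsym' 1]
          apply finval
          rw [hω₁ 1 (by omega)]
          exact hx1.symm
    -- pair for c2
    have hp2 : 2 ≤ (Finset.univ.filter fun t : Fin (k + 5) =>
        τ (((k + 2 : ℕ) : ZMod (4 * k + 6)) + ((t : ℕ) : ZMod (4 * k + 6))) = c2).card := by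
      refine two_le_filter_card (t₁ := (⟨1, by omega⟩ : Fin (k + 5)))
        (t₂ := (⟨k + 3, by omega⟩ : Fin (k + 5))) ?_ ?_ ?_
      · intro h
        rw [Fin.mk.injEq] at h
        omega
      · show τ (((k + 2 : ℕ) : ZMod (4 * k + 6)) + (((1 : ℕ)) : ZMod (4 * k + 6))) = c2
        rw [harg 1]
      · show τ (((k + 2 : ℕ) : ZMod (4 * k + 6)) + (((k + 3 : ℕ)) : ZMod (4 * k + 6))) = c2
        rw [harg (k + 3)]
        have e1 : (k + 2 + (k + 3) : ℕ) = 2 + (2 * k + 3) := by omega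
        rw [e1, hsym' 2]
        apply finval
        rw [hω₁ 2 (by omega)]
        exact hβ₁.symm
    -- pair for c3
    have hp3 : 2 ≤ (Finset.univ.filter fun t : Fin (k + 5) =>
        τ (((k + 2 : ℕ) : ZMod (4 * k + 6)) + ((t : ℕ) : ZMod (4 * k + 6))) = c3).card := by
      refine two_le_filter_card (t₁ := (⟨e, by omega⟩ : Fin (k + 5)))
        (t₂ := (⟨k + 4, by omega⟩ : Fin (k + 5))) ?_ ?_ ?_
      · intro h
        rw [Fin.mk.injEq] at h
        omega
      · show τ (((k + 2 : ℕ) : ZMod (4 * k + 6)) + (((e : ℕ)) : ZMod (4 * k + 6))) = c3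
        rw [harg e]
      · show τ (((k + 2 : ℕ) : ZMod (4 * k + 6)) + (((k + 4 : ℕ)) : ZMod (4 * k + 6))) = c3
        rw [harg (k + 4)]
        have e1 : (k + 2 + (k + 4) : ℕ) = 3 + (2 * k + 3) := by omega
        rw [e1, hsym' 3]
        apply finval
        rw [hω₁ 3 (by omega)]
        exact hval.symm
    -- the three values are distinct
    have hvx : cx.val = 0 ∨ cx.val = 1 := hx12
    have hv2 : c2.val = 2 := hβ₁
    have hv3 : c3.val = 3 := hval
    have hne12 : cx ≠ c2 := by
      intro h
      rw [h, hv2] at hvx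
      omega
    have hne13 : cx ≠ c3 := by
      intro h
      rw [h, hv3] at hvx
      omega
    have hne23 : c2 ≠ c3 := by
      intro h
      rw [h, hv3] at hv2
      omega
    have hcard : ({cx, c2, c3} : Finset (Fin d)).card = 3 := by
      rw [Finset.card_insert_of_notMem (by simp [hne12, hne13]),
        Finset.card_insert_of_notMem (by simp [hne23]), Finset.card_singleton]
    have hb := delta_bound τ ((k + 2 : ℕ) : ZMod (4 * k + 6)) (k + 5) {cx, c2, c3} (by
      intro c hc
      simp only [Finset.mem_insert, Finset.mem_singleton] at hc
      rcases hc with rfl | rfl | rfl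
      · exact hpx
      · exact hp2
      · exact hp3)
    rw [hcard] at hb
    have hl := lower ((k + 2 : ℕ) : ZMod (4 * k + 6)) (k + 5) (by omega) (by omega)
    omega
  -- main assembly
  suffices H : ∀ a b : Fin (k + 3), a.val ≤ b.val →
      τ (((k + 4 : ℕ) : ZMod (4 * k + 6)) + ((a : ℕ) : ZMod (4 * k + 6)))
        = τ (((k + 4 : ℕ) : ZMod (4 * k + 6)) + ((b : ℕ) : ZMod (4 * k + 6))) → a = b by
    intro a b hab
    rcases le_total a.val b.val with h | h
    · exact H a b h hab
    · exact (H b a h hab.symm).symm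
  intro a b hle heq
  by_cases hcase : a.val = b.val
  · exact Fin.val_injective hcase
  have hβle : b.val ≤ k + 2 := by omega
  rw [← Nat.cast_add, ← Nat.cast_add] at heq
  -- heq : τ ↑(k+4+a) = τ ↑(k+4+b)
  set α := a.val with hα
  set β := b.val with hβv
  have hL1 : 1 ≤ β - α := by omega
  by_cases hLk : β - α ≤ k
  · exfalso
    apply eng1 ((k + 4 + α : ℕ) : ZMod (4 * k + 6)) (β - α) hL1 hLk
    rw [← Nat.cast_add]
    have e1 : (k + 4 + α + (β - α) : ℕ) = k + 4 + β := by omega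
    rw [e1]
    exact heq
  · exfalso
    have hcases : (α = 0 ∧ β = k + 1) ∨ (α = 1 ∧ β = k + 2) ∨ (α = 0 ∧ β = k + 2) := by
      omega
    rcases hcases with ⟨ha0, hb⟩ | ⟨ha1, hb⟩ | ⟨ha0, hb⟩
    · -- τ(k+4) = τ(2k+5) = τ(2), so value 2, clash with position k+3
      have e1 : (k + 4 + α : ℕ) = k + 4 := by omega
      have e2 : (k + 4 + β : ℕ) = 2 + (2 * k + 3) := by omega
      rw [e1, e2, hsym' 2] at heq
      have hval4 : (τ ((k + 4 : ℕ) : ZMod (4 * k + 6))).val = 2 := by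
        rw [heq, hω₁ 2 (by omega)]
      have heq34 : τ ((k + 3 : ℕ) : ZMod (4 * k + 6)) = τ ((k + 4 : ℕ) : ZMod (4 * k + 6)) := by
        apply finval
        rw [hβ₁, hval4]
      apply eng1 ((k + 3 : ℕ) : ZMod (4 * k + 6)) 1 (by omega) (by omega)
      rw [← Nat.cast_add]
      have e3 : (k + 3 + 1 : ℕ) = k + 4 := by omega
      rw [e3]
      exact heq34
    · -- τ(k+5) = τ(2k+6) = τ(3), value 3
      have e1 : (k + 4 + α : ℕ) = k + 2 + 3 := by omega
      have e2 : (k + 4 + β : ℕ) = 3 + (2 * k + 3) := by omega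
      rw [e1, e2, hsym' 3] at heq
      apply eng2 3 (by omega) (by omega)
      rw [heq, hω₁ 3 (by omega)]
    · -- τ(k+4) = τ(2k+6) = τ(3), value 3
      have e1 : (k + 4 + α : ℕ) = k + 2 + 2 := by omega
      have e2 : (k + 4 + β : ℕ) = 3 + (2 * k + 3) := by omega
      rw [e1, e2, hsym' 3] at heq
      apply eng2 2 (by omega) (by omega)
      rw [heq, hω₁ 3 (by omega)]
end
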